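/- arXiv:math/0501246 — 6 statements merged into one kernel-verified Lean document; each statement's English description precedes it below -/
import Mathlib

section
/- The normalized volume of the hypersimplex Δ_{k,n} = {x ∈ [0,1]^{n-1} : k-1 ≤ x_1+⋯+x_{n-1} ≤ k} equals the Eulerian number A_{k,n-1}, the number of permutations of {1,…,n-1} with exactly k-1 descents. -/
open MeasureTheory

/-- Number of descents of a permutation of `Fin m` (positions `i` with `w i > w (i+1)`). -/
def numDescents {m : ℕ} (w : Equiv.Perm (Fin m)) : ℕ :=
  (Finset.univ.filter (fun i : Fin m => (i : ℕ) + 1 < m ∧ w ⟨((i : ℕ) + 1) % m, Nat.mod_lt _ i.pos⟩ < w i)).card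

namespace HSAux

open Finset

variable {m : ℕ}

/-! ### Basic combinatorial definitions -/

def Xp (x : Fin m → ℝ) (j : ℕ) : ℝ := if h : j < m then x ⟨j, h⟩ else 0

def ps (x : Fin m → ℝ) (j : ℕ) : ℝ := ∑ t ∈ Finset.range j, Xp x t

def dIdx (v : Equiv.Perm (Fin m)) (j : ℕ) : ℕ :=
  if h : j + 1 < m then (if v ⟨j+1, h⟩ < v ⟨j, by omega⟩ then 1 else 0) else 0

def cfun (v : Equiv.Perm (Fin m)) (i : ℕ) : ℕ := ∑ j ∈ Finset.range i, dIdx v j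

lemma Xp_lt (x : Fin m → ℝ) {j : ℕ} (hj : j < m) : Xp x j = x ⟨j, hj⟩ := by
  simp [Xp, hj]

lemma ps_succ_sub (x : Fin m → ℝ) (j : ℕ) : ps x (j+1) - ps x j = Xp x j := by
  simp [ps, Finset.sum_range_succ]

lemma dIdx_eq_zero (v : Equiv.Perm (Fin m)) {j : ℕ} (hj : ¬ j + 1 < m) : dIdx v j = 0 := by
  simp [dIdx, hj]

lemma numDescents_eq_sum (v : Equiv.Perm (Fin m)) :
    numDescents v = ∑ j ∈ Finset.range m, dIdx v j := by
  rw [numDescents, Finset.card_filter]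
  rw [← Fin.sum_univ_eq_sum_range (fun j => dIdx v j) m]
  apply Finset.sum_congr rfl
  intro i _
  by_cases h : (i : ℕ) + 1 < m
  · have hmod : ((i : ℕ) + 1) % m = (i : ℕ) + 1 := Nat.mod_eq_of_lt h
    simp only [dIdx, dif_pos h]
    congr 1
    · simp only [eq_iff_iff]
      constructor
      · rintro ⟨-, hlt⟩
        convert hlt using 3 <;> omega
      · intro hlt
        refine ⟨h, ?_⟩
        convert hlt using 3 <;> omega
  · simp [dIdx, h]

lemma cfun_eq_numDescents (v : Equiv.Perm (Fin m)) {i : ℕ} (hi : m - 1 ≤ i) :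
    cfun v i = numDescents v := by
  rw [numDescents_eq_sum, cfun]
  rcases le_or_gt i m with h | h
  · apply Finset.sum_subset (Finset.range_subset_range.2 h)
    intro j _ hj
    simp only [Finset.mem_range] at hj ⊢
    exact dIdx_eq_zero v (by omega)
  · symm
    apply Finset.sum_subset (Finset.range_subset_range.2 h.le)
    intro j _ hj
    simp only [Finset.mem_range] at hj ⊢
    exact dIdx_eq_zero v (by omega)

lemma cfun_succ (v : Equiv.Perm (Fin m)) (j : ℕ) :
    cfun v (j+1) = cfun v j + dIdx v j := by
  simp [cfun, Finset.sum_range_succ]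

lemma cfun_zero (v : Equiv.Perm (Fin m)) : cfun v 0 = 0 := by simp [cfun]

lemma sum_eq_ps (x : Fin m → ℝ) : ∑ i, x i = ps x m := by
  unfold ps
  rw [← Fin.sum_univ_eq_sum_range (fun t => Xp x t) m]
  refine Finset.sum_congr rfl fun i _ => ?_
  rw [Xp_lt x i.isLt]

/-! ### Permutations and rankings -/

lemma perm_le_of_strictMono (f : Equiv.Perm (Fin m)) (hf : StrictMono f) : ∀ i, i ≤ f i := by
  have aux : ∀ n (i : Fin m), (i : ℕ) < n → i ≤ f i := by
    intro n
    induction n with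
    | zero => intro i hi; omega
    | succ n ih =>
      intro i hi
      by_contra h
      push_neg at h
      have hfi : (f i : ℕ) < n := by
        have : (f i : ℕ) < (i : ℕ) := h
        omega
      have h3 : f i ≤ f (f i) := ih (f i) hfi
      exact absurd (h3.trans_lt (hf h)) (lt_irrefl _)
  intro i
  exact aux m i i.isLt

lemma perm_eq_of_strictMono (f : Equiv.Perm (Fin m)) (hf : StrictMono f) : ∀ i, f i = i := by
  have hsymm : StrictMono (f.symm : Fin m → Fin m) := by
    intro a b hab
    rcases lt_trichotomy (f.symm a) (f.symm b) with h | h | h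
    · exact h
    · exfalso; rw [← f.apply_symm_apply a, ← f.apply_symm_apply b, h] at hab
      exact lt_irrefl _ hab
    · exfalso
      have := hf h
      rw [f.apply_symm_apply, f.apply_symm_apply] at this
      exact absurd (hab.trans this) (lt_irrefl _)
  intro i
  have h1 := perm_le_of_strictMono f hf i
  have h2 := perm_le_of_strictMono f.symm hsymm i
  have h3 : f i ≤ f (f.symm i) := hf.monotone h2
  rw [f.apply_symm_apply] at h3
  exact le_antisymm h3 h1

lemma rank_unique (v v' : Equiv.Perm (Fin m))
    (h : ∀ i j, v i < v j → v' i < v' j) : v = v' := by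
  have hiff : ∀ i j, v i < v j ↔ v' i < v' j := by
    intro i j
    refine ⟨h i j, fun hv' => ?_⟩
    rcases lt_trichotomy (v i) (v j) with h1 | h1 | h1
    · exact h1
    · exfalso; have : i = j := v.injective h1
      subst this; exact lt_irrefl _ hv'
    · exfalso; exact absurd (hv'.trans (h j i h1)) (lt_irrefl _)
  have hf : StrictMono ((v' * v⁻¹ : Equiv.Perm (Fin m)) : Fin m → Fin m) := by
    intro a b hab
    have : v (v⁻¹ a) < v (v⁻¹ b) := by simpa using hab
    simpa using (hiff _ _).1 this
  apply Equiv.ext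
  intro i
  have := perm_eq_of_strictMono _ hf (v i)
  simp only [Equiv.Perm.coe_mul, Function.comp_apply, Equiv.Perm.inv_def, Equiv.symm_apply_apply] at this
  exact this.symm

lemma rank_exists (y : Fin m → ℝ) (hy : Function.Injective y) :
    ∃ v : Equiv.Perm (Fin m), ∀ i j, y i < y j ↔ v i < v j := by
  classical
  set σ := Tuple.sort y with hσ
  have hmono : Monotone (y ∘ σ) := Tuple.monotone_sort y
  have hsm : StrictMono (y ∘ σ) :=
    hmono.strictMono_of_injective (hy.comp σ.injective)
  refine ⟨σ⁻¹, fun i j => ?_⟩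
  have h1 : y i = (y ∘ σ) (σ⁻¹ i) := by simp
  have h2 : y j = (y ∘ σ) (σ⁻¹ j) := by simp
  rw [h1, h2, hsm.lt_iff_lt]

/-! ### Null sets: hyperplanes -/

lemma volume_hyperplane (ℓ : (Fin m → ℝ) →ₗ[ℝ] ℝ) (hl : ∃ u, ℓ u ≠ 0) (c : ℝ) :
    volume {x : Fin m → ℝ | ℓ x = c} = 0 := by
  obtain ⟨u, hu⟩ := hl
  set x₀ : Fin m → ℝ := (c / ℓ u) • u with hx₀
  have hℓx₀ : ℓ x₀ = c := by
    rw [hx₀, _root_.map_smul, smul_eq_mul, div_mul_cancel₀ _ hu]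
  have hpre : (fun y => y + x₀) ⁻¹' {x : Fin m → ℝ | ℓ x = c}
      = (LinearMap.ker ℓ : Set (Fin m → ℝ)) := by
    ext y
    simp only [Set.mem_preimage, Set.mem_setOf_eq, map_add, hℓx₀, SetLike.mem_coe,
      LinearMap.mem_ker]
    constructor
    · intro h; linarith
    · intro h; linarith
  have h1 : volume ((fun y => y + x₀) ⁻¹' {x : Fin m → ℝ | ℓ x = c})
      = volume {x : Fin m → ℝ | ℓ x = c} := measure_preimage_add_right volume x₀ _
  rw [hpre] at h1
  rw [← h1]
  apply Measure.addHaar_submodule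
  intro htop
  exact hu (by simp [LinearMap.ker_eq_top] at htop; simp [htop])

lemma ps_add (x y : Fin m → ℝ) (j : ℕ) : ps (x + y) j = ps x j + ps y j := by
  unfold ps
  rw [← Finset.sum_add_distrib]
  refine Finset.sum_congr rfl fun t _ => ?_
  unfold Xp; split <;> simp

lemma ps_smul (r : ℝ) (x : Fin m → ℝ) (j : ℕ) : ps (r • x) j = r * ps x j := by
  unfold ps
  rw [Finset.mul_sum]
  refine Finset.sum_congr rfl fun t _ => ?_
  unfold Xp; split <;> simp

def psL (j : ℕ) : (Fin m → ℝ) →ₗ[ℝ] ℝ where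
  toFun x := ps x j
  map_add' x y := ps_add x y j
  map_smul' r x := ps_smul r x j

@[simp] lemma psL_apply (j : ℕ) (x : Fin m → ℝ) : psL j x = ps x j := rfl

lemma ps_single {p : Fin m} (j : ℕ) :
    ps (Pi.single p (1:ℝ)) j = if (p:ℕ) < j then 1 else 0 := by
  have hXp : ∀ t, Xp (Pi.single p (1:ℝ)) t = if t = (p:ℕ) then 1 else 0 := by
    intro t
    unfold Xp
    split
    · rename_i h
      rw [Pi.single_apply]
      congr 1
      simp only [eq_iff_iff, Fin.ext_iff]
    · rename_i h
      have : t ≠ (p : ℕ) := by have := p.isLt; omega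
      simp [this]
  unfold ps
  simp_rw [hXp]
  rw [Finset.sum_ite_eq' (Finset.range j) ((p:ℕ)) (fun _ => (1:ℝ))]
  simp [Finset.mem_range]

lemma measurable_ps (j : ℕ) : Measurable (fun x : Fin m → ℝ => ps x j) := by
  unfold ps
  apply Finset.measurable_sum
  intro t _
  unfold Xp
  split
  · exact measurable_pi_apply _
  · exact measurable_const

/-! ### The bad (null) set in x-space -/

def Nbad (m : ℕ) : Set (Fin m → ℝ) :=
  {x | (∃ i : Fin m, ∃ z : ℤ, ps x ((i:ℕ)+1) = z) ∨
    (∃ i j : Fin m, i ≠ j ∧ ∃ z : ℤ, ps x ((i:ℕ)+1) - ps x ((j:ℕ)+1) = z)}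

lemma volume_Nbad (hm : 0 < m) : volume (Nbad m) = 0 := by
  have hsub : Nbad m ⊆
      (⋃ i : Fin m, ⋃ z : ℤ, {x : Fin m → ℝ | psL ((i:ℕ)+1) x = (z:ℝ)}) ∪
      (⋃ p : Fin m × Fin m, ⋃ z : ℤ,
        {x : Fin m → ℝ | p.1 ≠ p.2 ∧ (psL ((p.1:ℕ)+1) - psL ((p.2:ℕ)+1) :
          (Fin m → ℝ) →ₗ[ℝ] ℝ) x = (z:ℝ)}) := by
    rintro x (⟨i, z, hx⟩ | ⟨i, j, hij, z, hx⟩)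
    · left
      exact Set.mem_iUnion.2 ⟨i, Set.mem_iUnion.2 ⟨z, hx⟩⟩
    · right
      refine Set.mem_iUnion.2 ⟨⟨i, j⟩, Set.mem_iUnion.2 ⟨z, hij, ?_⟩⟩
      simpa using hx
  apply measure_mono_null hsub
  apply measure_union_null
  · refine measure_iUnion_null fun i => measure_iUnion_null fun z => ?_
    apply volume_hyperplane
    refine ⟨Pi.single ⟨0, hm⟩ 1, ?_⟩
    rw [psL_apply, ps_single]
    norm_num
  · refine measure_iUnion_null fun p => measure_iUnion_null fun z => ?_
    by_cases hp : p.1 = p.2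
    · have : {x : Fin m → ℝ | p.1 ≠ p.2 ∧ (psL ((p.1:ℕ)+1) - psL ((p.2:ℕ)+1) :
          (Fin m → ℝ) →ₗ[ℝ] ℝ) x = (z:ℝ)} = ∅ := by
        ext x; simp [hp]
      rw [this]
      simp
    · refine measure_mono_null (fun x hx => hx.2) (?_ :
        volume {x : Fin m → ℝ | (psL ((p.1:ℕ)+1) - psL ((p.2:ℕ)+1) :
          (Fin m → ℝ) →ₗ[ℝ] ℝ) x = (z:ℝ)} = 0)
      apply volume_hyperplane
      rcases Ne.lt_or_gt (fun h : (p.1:ℕ) = (p.2:ℕ) => hp (Fin.ext h)) with h | h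
      · refine ⟨Pi.single p.2 1, ?_⟩
        simp only [LinearMap.sub_apply, psL_apply, ps_single]
        rw [if_neg (by omega), if_pos (by omega)]
        norm_num
      · refine ⟨Pi.single p.1 1, ?_⟩
        simp only [LinearMap.sub_apply, psL_apply, ps_single]
        rw [if_pos (by omega), if_neg (by omega)]
        norm_num

/-! ### Order regions -/

def OSet (v : Equiv.Perm (Fin m)) : Set (Fin m → ℝ) :=
  {y | (∀ i, 0 < y i ∧ y i < 1) ∧ ∀ i j, v i < v j → y i < y j}

lemma OSet_measurable (v : Equiv.Perm (Fin m)) : MeasurableSet (OSet v) := by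
  have : OSet v = {y : Fin m → ℝ | ∀ i, 0 < y i ∧ y i < 1} ∩
      {y : Fin m → ℝ | ∀ i j, v i < v j → y i < y j} := rfl
  rw [this]
  apply MeasurableSet.inter
  · rw [Set.setOf_forall]
    apply MeasurableSet.iInter
    intro i
    exact MeasurableSet.inter
      (measurableSet_lt measurable_const (measurable_pi_apply i))
      (measurableSet_lt (measurable_pi_apply i) measurable_const)
  · rw [Set.setOf_forall]
    apply MeasurableSet.iInter
    intro i
    rw [Set.setOf_forall]
    apply MeasurableSet.iInter
    intro j
    by_cases h : v i < v j
    · simp only [h, forall_true_left]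
      exact measurableSet_lt (measurable_pi_apply i) (measurable_pi_apply j)
    · simp only [h, IsEmpty.forall_iff, false_implies, Set.setOf_true]
      exact MeasurableSet.univ

lemma OSet_eq_preimage (v : Equiv.Perm (Fin m)) :
    OSet v = (MeasurableEquiv.piCongrLeft (fun _ : Fin m => ℝ) (v : Fin m ≃ Fin m)) ⁻¹'
      OSet (1 : Equiv.Perm (Fin m)) := by
  ext y
  have happ : ∀ i, (MeasurableEquiv.piCongrLeft (fun _ : Fin m => ℝ) (v : Fin m ≃ Fin m)) y (v i)
      = y i := by
    intro i
    exact Equiv.piCongrLeft_apply_apply (fun _ : Fin m => ℝ) (v : Fin m ≃ Fin m) y i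
  constructor
  · rintro ⟨h1, h2⟩
    constructor
    · intro b
      have := happ (v.symm b)
      rw [Equiv.apply_symm_apply] at this
      rw [this]
      exact h1 _
    · intro a b hab
      have ha := happ (v.symm a)
      have hb := happ (v.symm b)
      rw [Equiv.apply_symm_apply] at ha hb
      rw [ha, hb]
      apply h2
      simpa [Equiv.apply_symm_apply] using hab
  · rintro ⟨h1, h2⟩
    constructor
    · intro i
      have := h1 (v i)
      rwa [happ] at this
    · intro i j hij
      have := h2 (v i) (v j) (by simpa using hij)
      rwa [happ, happ] at this

lemma OSet_volume_eq (v : Equiv.Perm (Fin m)) :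
    volume (OSet v) = volume (OSet (1 : Equiv.Perm (Fin m))) := by
  rw [OSet_eq_preimage v]
  exact (volume_measurePreserving_piCongrLeft (fun _ : Fin m => ℝ) v).measure_preimage
    (OSet_measurable 1).nullMeasurableSet

lemma OSet_disjoint {v v' : Equiv.Perm (Fin m)} (h : v ≠ v') :
    Disjoint (OSet v) (OSet v') := by
  rw [Set.disjoint_left]
  rintro y ⟨-, h2⟩ ⟨-, h2'⟩
  apply h
  apply rank_unique v v'
  intro i j hij
  have hyij : y i < y j := h2 i j hij
  rcases lt_trichotomy (v' i) (v' j) with hh | hh | hh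
  · exact hh
  · exact absurd (v'.injective hh ▸ hyij) (lt_irrefl _)
  · exact absurd (hyij.trans (h2' j i hh)) (lt_irrefl _)

lemma volume_diag_null :
    volume {y : Fin m → ℝ | ∃ i j, i ≠ j ∧ y i = y j} = 0 := by
  have hsub : {y : Fin m → ℝ | ∃ i j, i ≠ j ∧ y i = y j} ⊆
      ⋃ p : Fin m × Fin m, {y : Fin m → ℝ | p.1 ≠ p.2 ∧ y p.1 - y p.2 = 0} := by
    rintro y ⟨i, j, hij, hy⟩
    exact Set.mem_iUnion.2 ⟨⟨i, j⟩, hij, by simp [hy]⟩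
  refine measure_mono_null hsub (measure_iUnion_null fun p => ?_)
  by_cases hp : p.1 ≠ p.2
  · have : {y : Fin m → ℝ | p.1 ≠ p.2 ∧ y p.1 - y p.2 = 0}
        = {y : Fin m → ℝ | (LinearMap.proj (R := ℝ) (φ := fun _ : Fin m => ℝ) p.1 - LinearMap.proj (R := ℝ) (φ := fun _ : Fin m => ℝ) p.2) y = 0} := by
      ext y; simp [hp]
    rw [this]
    apply volume_hyperplane
    refine ⟨Pi.single p.1 1, ?_⟩
    simp [LinearMap.proj_apply, Pi.single_apply, hp, (Ne.symm hp)]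
  · have : {y : Fin m → ℝ | p.1 ≠ p.2 ∧ y p.1 - y p.2 = 0} = ∅ := by
      ext y; simp [hp]
    simp [this]

lemma volume_OSet_one (hm : 0 < m) :
    (Nat.factorial m : ENNReal) * volume (OSet (1 : Equiv.Perm (Fin m))) = 1 := by
  classical
  have hsum : ∑ v ∈ (Finset.univ : Finset (Equiv.Perm (Fin m))), volume (OSet v)
      = volume (⋃ v ∈ (Finset.univ : Finset (Equiv.Perm (Fin m))), OSet v) := by
    symm
    apply measure_biUnion_finset
    · intro v _ v' _ hvv'
      exact OSet_disjoint hvv'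
    · intro v _
      exact OSet_measurable v
  have hU_le : volume (⋃ v ∈ (Finset.univ : Finset (Equiv.Perm (Fin m))), OSet v) ≤ 1 := by
    have hsub : (⋃ v ∈ (Finset.univ : Finset (Equiv.Perm (Fin m))), OSet v)
        ⊆ Set.pi Set.univ (fun _ : Fin m => Set.Ioo (0:ℝ) 1) := by
      intro y hy
      simp only [Set.mem_iUnion] at hy
      obtain ⟨v, -, h1, -⟩ := hy
      intro i _
      exact ⟨(h1 i).1, (h1 i).2⟩
    calc volume _ ≤ volume (Set.pi Set.univ (fun _ : Fin m => Set.Ioo (0:ℝ) 1)) :=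
          measure_mono hsub
      _ = 1 := by simp [volume_pi_pi]
  have hU_ge : 1 ≤ volume (⋃ v ∈ (Finset.univ : Finset (Equiv.Perm (Fin m))), OSet v) := by
    have hcover : Set.pi Set.univ (fun _ : Fin m => Set.Ioo (0:ℝ) 1) ⊆
        (⋃ v ∈ (Finset.univ : Finset (Equiv.Perm (Fin m))), OSet v)
          ∪ {y : Fin m → ℝ | ∃ i j, i ≠ j ∧ y i = y j} := by
      intro y hy
      by_cases hinj : Function.Injective y
      · left
        obtain ⟨v, hv⟩ := rank_exists y hinj
        simp only [Set.mem_iUnion]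
        refine ⟨v, Finset.mem_univ v, ⟨fun i => ?_, fun i j hij => (hv i j).2 hij⟩⟩
        have := hy i (Set.mem_univ i)
        exact ⟨this.1, this.2⟩
      · right
        simp only [Function.Injective, not_forall] at hinj
        obtain ⟨i, j, hyij, hij⟩ := hinj
        exact ⟨i, j, hij, hyij⟩
    calc (1 : ENNReal) = volume (Set.pi Set.univ (fun _ : Fin m => Set.Ioo (0:ℝ) 1)) := by
          simp [volume_pi_pi]
      _ ≤ volume ((⋃ v ∈ (Finset.univ : Finset (Equiv.Perm (Fin m))), OSet v)
            ∪ {y : Fin m → ℝ | ∃ i j, i ≠ j ∧ y i = y j}) := measure_mono hcover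
      _ ≤ _ + volume {y : Fin m → ℝ | ∃ i j, i ≠ j ∧ y i = y j} := measure_union_le _ _
      _ = _ := by rw [volume_diag_null, add_zero]
  have hU : volume (⋃ v ∈ (Finset.univ : Finset (Equiv.Perm (Fin m))), OSet v) = 1 :=
    le_antisymm hU_le hU_ge
  have hsum2 : ∑ v ∈ (Finset.univ : Finset (Equiv.Perm (Fin m))), volume (OSet v)
      = (Nat.factorial m : ENNReal) * volume (OSet (1 : Equiv.Perm (Fin m))) := by
    rw [Finset.sum_congr rfl (fun v _ => OSet_volume_eq v), Finset.sum_const, Finset.card_univ,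
      Fintype.card_perm, Fintype.card_fin, nsmul_eq_mul]
  rw [← hsum2, hsum, hU]

/-! ### The partial-sum linear map -/

def Mlow (m : ℕ) : Matrix (Fin m) (Fin m) ℝ := fun i j => if (j:ℕ) ≤ (i:ℕ) then 1 else 0

lemma Mlow_det : (Mlow m).det = 1 := by
  rw [Matrix.det_of_lowerTriangular (Mlow m)]
  · simp [Mlow]
  · intro i j hij
    simp only [Mlow, ite_eq_right_iff]
    intro h
    exfalso
    simp only [OrderDual.toDual_lt_toDual] at hij
    omega

lemma Mlow_mulVec (x : Fin m → ℝ) (i : Fin m) :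
    Matrix.toLin' (Mlow m) x i = ps x ((i:ℕ)+1) := by
  rw [Matrix.toLin'_apply]
  have lhs : (Mlow m).mulVec x i = ∑ j : Fin m, (if (j:ℕ) ≤ (i:ℕ) then Xp x (j:ℕ) else 0) := by
    unfold Matrix.mulVec dotProduct Mlow
    refine Finset.sum_congr rfl fun j _ => ?_
    by_cases h : (j:ℕ) ≤ (i:ℕ)
    · simp [h, Xp, j.isLt]
    · simp [h]
  rw [lhs, Fin.sum_univ_eq_sum_range (fun t => if t ≤ (i:ℕ) then Xp x t else 0) m]
  unfold ps
  rw [← Finset.sum_subset (Finset.range_subset_range.2 i.isLt)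
      (fun t _ ht => by simp only [Finset.mem_range] at ht; rw [if_neg (by omega)])]
  refine Finset.sum_congr rfl fun t ht => ?_
  simp only [Finset.mem_range] at ht
  rw [if_pos (by omega)]


/-! ### The pieces Q v -/

noncomputable def Fmap (v : Equiv.Perm (Fin m)) (x : Fin m → ℝ) : Fin m → ℝ :=
  fun i => ps x ((i:ℕ)+1) - (cfun v (i:ℕ) : ℝ)

def QSet (v : Equiv.Perm (Fin m)) : Set (Fin m → ℝ) := Fmap v ⁻¹' OSet v

noncomputable def cR (v : Equiv.Perm (Fin m)) : Fin m → ℝ := fun i => (cfun v (i:ℕ) : ℝ)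

lemma QSet_eq (v : Equiv.Perm (Fin m)) :
    QSet v = (Matrix.toLin' (Mlow m)) ⁻¹' ((fun s => s + (-(cR v))) ⁻¹' OSet v) := by
  ext x
  simp only [QSet, Set.mem_preimage]
  have : Fmap v x = Matrix.toLin' (Mlow m) x + (-(cR v)) := by
    funext i
    simp only [Fmap, Pi.add_apply, Pi.neg_apply, cR, Mlow_mulVec]
    ring
  rw [this]

lemma QSet_measurable (v : Equiv.Perm (Fin m)) : MeasurableSet (QSet v) := by
  apply MeasurableSet.preimage (OSet_measurable v)
  apply measurable_pi_lambda
  intro i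
  exact (measurable_ps _).sub measurable_const

lemma QSet_volume (v : Equiv.Perm (Fin m)) : volume (QSet v) = volume (OSet v) := by
  rw [QSet_eq]
  have hdet : LinearMap.det (Matrix.toLin' (Mlow m)) ≠ 0 := by
    rw [LinearMap.det_toLin', Mlow_det]; norm_num
  rw [Measure.addHaar_preimage_linearMap volume hdet]
  rw [LinearMap.det_toLin', Mlow_det]
  rw [measure_preimage_add_right volume (-(cR v)) (OSet v)]
  norm_num

/-! ### Pointwise claims -/

lemma Q_subset_S (hm : 0 < m) {k : ℕ} (hk : 0 < k) (v : Equiv.Perm (Fin m))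
    (hv : numDescents v = k - 1) :
    QSet v ⊆ {x : Fin m → ℝ |
      (∀ i, 0 ≤ x i ∧ x i ≤ 1) ∧ (k - 1 : ℝ) ≤ ∑ i, x i ∧ ∑ i, x i ≤ (k : ℝ)} := by
  intro x hx
  obtain ⟨hy1, hy2⟩ := hx
  set y := Fmap v x with hy
  have hps : ∀ i : Fin m, ps x ((i:ℕ)+1) = y i + (cfun v (i:ℕ) : ℝ) := by
    intro i
    have : y i = ps x ((i:ℕ)+1) - (cfun v (i:ℕ) : ℝ) := rfl
    linarith
  have hcoord : ∀ i : Fin m, 0 ≤ x i ∧ x i ≤ 1 := by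
    intro i
    have hxi : x i = ps x ((i:ℕ)+1) - ps x (i:ℕ) := by
      rw [ps_succ_sub, Xp_lt x i.isLt]
    rcases Nat.eq_zero_or_pos (i:ℕ) with h0 | hpos
    · have hps0 : ps x 0 = 0 := by simp [ps]
      have hE := hps i
      rw [h0] at hE hxi
      rw [hps0] at hxi
      rw [cfun_zero] at hE
      push_cast at hE
      have hb := hy1 i
      constructor <;> linarith [hb.1, hb.2, hE, hxi]
    · obtain ⟨t, ht⟩ : ∃ t, (i:ℕ) = t + 1 := ⟨(i:ℕ) - 1, by omega⟩
      have htm : t < m := by have := i.isLt; omega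
      have ht1m : t + 1 < m := by have := i.isLt; omega
      have hpst : ps x (t+1) = y ⟨t, htm⟩ + (cfun v t : ℝ) := by
        have := hps ⟨t, htm⟩
        simpa using this
      have hiv : i = ⟨t+1, ht1m⟩ := Fin.ext (by simpa using ht)
      have hxi2 : x i = y i - y ⟨t, htm⟩ + (dIdx v t : ℝ) := by
        rw [hxi, hps i, ht, cfun_succ, hpst]
        push_cast
        ring
      have hd : dIdx v t = if v ⟨t+1, ht1m⟩ < v ⟨t, by omega⟩ then 1 else 0 := by
        simp [dIdx, ht1m]
      by_cases hdes : v ⟨t+1, ht1m⟩ < v ⟨t, by omega⟩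
      · have hylt : y ⟨t+1, ht1m⟩ < y ⟨t, htm⟩ := hy2 _ _ hdes
        rw [hd, if_pos hdes] at hxi2
        rw [hiv] at hxi2 ⊢
        have h1 := hy1 (⟨t+1, ht1m⟩ : Fin m)
        have h2 := hy1 (⟨t, htm⟩ : Fin m)
        constructor <;> push_cast at hxi2 <;> linarith [h1.1, h1.2, h2.1, h2.2]
      · have hne : v ⟨t, htm⟩ ≠ v ⟨t+1, ht1m⟩ := by
          intro h
          have : (⟨t, htm⟩ : Fin m) = ⟨t+1, ht1m⟩ := v.injective h
          simp only [Fin.mk.injEq] at this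
          omega
        have hlt : v ⟨t, htm⟩ < v ⟨t+1, ht1m⟩ := by
          rcases lt_or_gt_of_ne hne with h | h
          · exact h
          · exact absurd h hdes
        have hylt : y ⟨t, htm⟩ < y ⟨t+1, ht1m⟩ := hy2 _ _ hlt
        rw [hd, if_neg hdes] at hxi2
        rw [hiv] at hxi2 ⊢
        have h1 := hy1 (⟨t+1, ht1m⟩ : Fin m)
        have h2 := hy1 (⟨t, htm⟩ : Fin m)
        constructor <;> push_cast at hxi2 <;> linarith [h1.1, h1.2, h2.1, h2.2]
  refine ⟨hcoord, ?_, ?_⟩ <;>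
  · have hm1 : m - 1 < m := by omega
    have hms : m - 1 + 1 = m := by omega
    have hlast : ps x m = y ⟨m-1, hm1⟩ + (cfun v (m-1) : ℝ) := by
      have h := hps ⟨m-1, hm1⟩
      simp only [Fin.val_mk] at h
      rw [hms] at h
      exact h
    have hcv : cfun v (m-1) = k - 1 := by
      rw [cfun_eq_numDescents v (le_refl _), hv]
    have hcast : ((k - 1 : ℕ) : ℝ) = (k : ℝ) - 1 := by
      push_cast [Nat.cast_sub hk]
      ring
    have hyb := hy1 (⟨m-1, hm1⟩ : Fin m)
    rw [sum_eq_ps, hlast, hcv, hcast]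
    linarith [hyb.1, hyb.2]

lemma S_almost_subset (hm : 0 < m) {k : ℕ} (hk : 0 < k) (x : Fin m → ℝ)
    (hx : x ∈ {x : Fin m → ℝ |
      (∀ i, 0 ≤ x i ∧ x i ≤ 1) ∧ (k - 1 : ℝ) ≤ ∑ i, x i ∧ ∑ i, x i ≤ (k : ℝ)})
    (hn : x ∉ Nbad m) :
    ∃ v : Equiv.Perm (Fin m), numDescents v = k - 1 ∧ x ∈ QSet v := by
  obtain ⟨hx1, hx2, hx3⟩ := hx
  simp only [Nbad, Set.mem_setOf_eq, not_or, not_exists] at hn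
  obtain ⟨hni', hnd'⟩ := hn
  have hni : ∀ i : Fin m, ∀ z : ℤ, ps x ((i:ℕ)+1) ≠ z := by
    intro i z h
    exact hni' i z h
  have hnd : ∀ i j : Fin m, i ≠ j → ∀ z : ℤ, ps x ((i:ℕ)+1) - ps x ((j:ℕ)+1) ≠ z := by
    intro i j hij z h
    exact hnd' i j ⟨hij, z, h⟩
  set y' : Fin m → ℝ := fun i => Int.fract (ps x ((i:ℕ)+1)) with hy'
  have hinj : Function.Injective y' := by
    intro i j hij
    by_contra hne
    obtain ⟨z, hz⟩ := Int.fract_eq_fract.1 hij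
    exact hnd i j hne z hz
  obtain ⟨v, hv⟩ := rank_exists y' hinj
  -- floors equal cfun
  have hfloor : ∀ j, j < m → (⌊ps x (j+1)⌋ : ℤ) = (cfun v j : ℤ) := by
    intro j
    induction j with
    | zero =>
      intro hj
      have hps1 : ps x 1 = x ⟨0, hj⟩ := by
        have := ps_succ_sub x 0
        have h0 : ps x 0 = 0 := by simp [ps]
        rw [h0, sub_zero] at this
        rw [this, Xp_lt x hj]
      have hb := hx1 ⟨0, hj⟩
      have hne1 : ps x 1 ≠ ((1:ℤ) : ℝ) := by
        have := hni ⟨0, hj⟩ 1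
        simpa using this
      have hlt1 : ps x 1 < 1 := by
        rcases lt_or_eq_of_le (hps1 ▸ hb.2) with h | h
        · exact h
        · exact absurd (by exact_mod_cast h) hne1
      have hge0 : 0 ≤ ps x 1 := hps1 ▸ hb.1
      rw [cfun_zero]
      simp only [Nat.cast_zero]
      exact Int.floor_eq_zero_iff.2 ⟨hge0, hlt1⟩
    | succ j ih =>
      intro hj
      have hjm : j < m := by omega
      have IH := ih hjm
      set a := ps x (j+1) with ha
      set b := ps x (j+2) with hb
      have hba : b - a = x ⟨j+1, hj⟩ := by
        rw [hb, ha]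
        have := ps_succ_sub x (j+1)
        rw [this, Xp_lt x hj]
      have hbnds := hx1 ⟨j+1, hj⟩
      have hfra : Int.fract b ≠ Int.fract a := by
        intro h
        obtain ⟨z, hz⟩ := Int.fract_eq_fract.1 h
        have hij : (⟨j+1, hj⟩ : Fin m) ≠ ⟨j, hjm⟩ := by
          simp only [ne_eq, Fin.mk.injEq]
          omega
        exact hnd ⟨j+1, hj⟩ ⟨j, hjm⟩ hij z (by simpa using hz)
      have hfa : (⌊a⌋ : ℝ) = a - Int.fract a := by rw [Int.self_sub_fract]
      have hfb : (⌊b⌋ : ℝ) = b - Int.fract b := by rw [Int.self_sub_fract]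
      have hfa0 : 0 ≤ Int.fract a := Int.fract_nonneg a
      have hfa1 : Int.fract a < 1 := Int.fract_lt_one a
      have hfb0 : 0 ≤ Int.fract b := Int.fract_nonneg b
      have hfb1 : Int.fract b < 1 := Int.fract_lt_one b
      have hyj1 : y' ⟨j+1, hj⟩ = Int.fract b := by simp [hy', hb]
      have hyj : y' ⟨j, hjm⟩ = Int.fract a := by simp [hy', ha]
      have hkey : (⌊b⌋ - ⌊a⌋ : ℤ) = if Int.fract b < Int.fract a then 1 else 0 := by
        rcases lt_or_gt_of_ne hfra with hlt | hgt
        · rw [if_pos hlt]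
          have h1 : (0:ℝ) < (⌊b⌋ - ⌊a⌋ : ℤ) := by push_cast; rw [hfb, hfa] at *; push_cast at *; linarith
          have h2 : ((⌊b⌋ - ⌊a⌋ : ℤ) : ℝ) < 2 := by push_cast; rw [hfb, hfa] at *; push_cast at *; linarith
          have h1' : (0:ℤ) < ⌊b⌋ - ⌊a⌋ := by exact_mod_cast h1
          have h2' : (⌊b⌋ - ⌊a⌋ : ℤ) < 2 := by exact_mod_cast h2
          omega
        · rw [if_neg (by linarith)]
          have h1 : (-1:ℝ) < (⌊b⌋ - ⌊a⌋ : ℤ) := by push_cast; rw [hfb, hfa] at *; push_cast at *; linarith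
          have h2 : ((⌊b⌋ - ⌊a⌋ : ℤ) : ℝ) < 1 := by push_cast; rw [hfb, hfa] at *; push_cast at *; linarith
          have h1' : (-1:ℤ) < ⌊b⌋ - ⌊a⌋ := by exact_mod_cast h1
          have h2' : (⌊b⌋ - ⌊a⌋ : ℤ) < 1 := by exact_mod_cast h2
          omega
      have hdIdx : (dIdx v j : ℤ) = if Int.fract b < Int.fract a then 1 else 0 := by
        have hd : dIdx v j = if v ⟨j+1, hj⟩ < v ⟨j, by omega⟩ then 1 else 0 := by
          simp [dIdx, hj]
        rw [hd]
        have : (v ⟨j+1, hj⟩ < v ⟨j, by omega⟩) ↔ (Int.fract b < Int.fract a) := by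
          rw [← hv ⟨j+1, hj⟩ ⟨j, by omega⟩, hyj1, hyj]
        rw [if_congr this rfl rfl]
        split <;> simp
      rw [cfun_succ]
      push_cast
      omega
  -- x ∈ QSet v
  have hQ : x ∈ QSet v := by
    have hFy : Fmap v x = y' := by
      funext i
      have hf := hfloor ((i:ℕ)+1-1) (by simpa using i.isLt)
      simp only [Nat.add_sub_cancel] at hf
      have : (cfun v (i:ℕ) : ℝ) = (⌊ps x ((i:ℕ)+1)⌋ : ℝ) := by
        exact_mod_cast hf.symm
      simp only [Fmap, this, hy']
      rw [Int.self_sub_floor]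
    rw [QSet, Set.mem_preimage, hFy]
    constructor
    · intro i
      refine ⟨?_, ?_⟩
      · rcases lt_or_eq_of_le (Int.fract_nonneg (ps x ((i:ℕ)+1))) with h | h
        · exact h
        · exfalso
          have : ps x ((i:ℕ)+1) = (⌊ps x ((i:ℕ)+1)⌋ : ℝ) := by
            have := Int.self_sub_fract (ps x ((i:ℕ)+1))
            rw [← h] at this
            linarith [this]
          exact hni i ⌊ps x ((i:ℕ)+1)⌋ this
      · exact Int.fract_lt_one _
    · intro i j hij
      exact (hv i j).2 hij
  -- descent count
  have hcnt : numDescents v = k - 1 := by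
    have hm1 : m - 1 < m := by omega
    have hms : m - 1 + 1 = m := by omega
    have hf := hfloor (m-1) hm1
    rw [hms] at hf
    have hsum : ps x m = ∑ i, x i := (sum_eq_ps x).symm
    have hne : ps x m ≠ ((k:ℤ) : ℝ) := by
      have := hni ⟨m-1, hm1⟩ (k : ℤ)
      rw [hms] at this
      simpa using this
    have hltk : ps x m < (k:ℝ) := by
      rcases lt_or_eq_of_le (hsum ▸ hx3) with h | h
      · exact h
      · exact absurd (by exact_mod_cast h) hne
    have hgek : ((k:ℝ) - 1) ≤ ps x m := hsum ▸ hx2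
    have hfl : ⌊ps x m⌋ = (k:ℤ) - 1 := by
      apply Int.floor_eq_iff.2
      constructor
      · push_cast; linarith
      · push_cast; linarith
    rw [hfl] at hf
    have hcf : cfun v (m-1) = numDescents v := cfun_eq_numDescents v (le_refl _)
    rw [hcf] at hf
    omega
  exact ⟨v, hcnt, hQ⟩

lemma Q_disjoint {v v' : Equiv.Perm (Fin m)} (h : v ≠ v') :
    Disjoint (QSet v) (QSet v') := by
  rw [Set.disjoint_left]
  intro x hx hx'
  have hy := hx
  have hy' := hx'
  obtain ⟨h1, h2⟩ := hy
  obtain ⟨h1', h2'⟩ := hy'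
  have heq : Fmap v x = Fmap v' x := by
    funext i
    have hz : Fmap v x i - Fmap v' x i = ((cfun v' (i:ℕ) : ℤ) - (cfun v (i:ℕ) : ℤ) : ℤ) := by
      simp only [Fmap]
      push_cast
      ring
    have hb1 := h1 i
    have hb2 := h1' i
    have hlt : (-1:ℝ) < ((cfun v' (i:ℕ) : ℤ) - (cfun v (i:ℕ) : ℤ) : ℤ) := by
      rw [← hz]; linarith [hb1.1, hb1.2, hb2.1, hb2.2]
    have hgt : (((cfun v' (i:ℕ) : ℤ) - (cfun v (i:ℕ) : ℤ) : ℤ) : ℝ) < 1 := by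
      rw [← hz]; linarith [hb1.1, hb1.2, hb2.1, hb2.2]
    have h1'' : (-1:ℤ) < (cfun v' (i:ℕ) : ℤ) - (cfun v (i:ℕ) : ℤ) := by exact_mod_cast hlt
    have h2'' : ((cfun v' (i:ℕ) : ℤ) - (cfun v (i:ℕ) : ℤ)) < 1 := by exact_mod_cast hgt
    have : (cfun v' (i:ℕ) : ℤ) = (cfun v (i:ℕ) : ℤ) := by omega
    have hz0 : Fmap v x i - Fmap v' x i = 0 := by rw [hz, this]; simp
    linarith
  apply h
  apply rank_unique v v'
  intro i j hij
  have hyij : Fmap v x i < Fmap v x j := h2 i j hij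
  rw [heq] at hyij
  rcases lt_trichotomy (v' i) (v' j) with hh | hh | hh
  · exact hh
  · exfalso
    have : i = j := v'.injective hh
    subst this
    exact lt_irrefl _ hyij
  · exact absurd (hyij.trans (h2' j i hh)) (lt_irrefl _)


lemma key (m k : ℕ) (hm : 0 < m) (hk : 0 < k) :
    (Nat.factorial m : ENNReal) *
      volume {x : Fin m → ℝ |
        (∀ i, 0 ≤ x i ∧ x i ≤ 1) ∧ (k - 1 : ℝ) ≤ ∑ i, x i ∧ ∑ i, x i ≤ (k : ℝ)} =
    ((Finset.univ.filter
        (fun w : Equiv.Perm (Fin m) => numDescents w = k - 1)).card : ENNReal) := by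
  classical
  set S := {x : Fin m → ℝ |
    (∀ i, 0 ≤ x i ∧ x i ≤ 1) ∧ (k - 1 : ℝ) ≤ ∑ i, x i ∧ ∑ i, x i ≤ (k : ℝ)} with hS
  set G := (Finset.univ.filter
    (fun w : Equiv.Perm (Fin m) => numDescents w = k - 1)) with hG
  set U := ⋃ v ∈ G, QSet v with hU
  have hUS : U ⊆ S := by
    intro x hx
    simp only [hU, Set.mem_iUnion] at hx
    obtain ⟨v, hvG, hxQ⟩ := hx
    have hv : numDescents v = k - 1 := (Finset.mem_filter.1 hvG).2
    exact Q_subset_S hm hk v hv hxQ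
  have hSUN : S ⊆ U ∪ Nbad m := by
    intro x hx
    by_cases hn : x ∈ Nbad m
    · exact Or.inr hn
    · left
      obtain ⟨v, hv, hxQ⟩ := S_almost_subset hm hk x hx hn
      simp only [hU, Set.mem_iUnion]
      exact ⟨v, Finset.mem_filter.2 ⟨Finset.mem_univ v, hv⟩, hxQ⟩
  have hvolS : volume S = volume U := by
    apply le_antisymm
    · calc volume S ≤ volume (U ∪ Nbad m) := measure_mono hSUN
        _ ≤ volume U + volume (Nbad m) := measure_union_le _ _
        _ = volume U := by rw [volume_Nbad hm, add_zero]
    · exact measure_mono hUS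
  have hvolU : volume U = (G.card : ENNReal) * volume (OSet (1 : Equiv.Perm (Fin m))) := by
    rw [hU, measure_biUnion_finset]
    · rw [Finset.sum_congr rfl (fun v _ => (QSet_volume v).trans (OSet_volume_eq v)),
        Finset.sum_const, nsmul_eq_mul]
    · intro v _ v' _ hvv'
      exact Q_disjoint hvv'
    · intro v _
      exact QSet_measurable v
  rw [hvolS, hvolU, ← mul_assoc, mul_comm (Nat.factorial m : ENNReal) (G.card : ENNReal),
    mul_assoc, volume_OSet_one hm, mul_one]

end HSAux

/-- The normalized volume of the hypersimplex `Δ_{k,n}` equals the Eulerian number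
`A_{k,n-1}`, the number of permutations of `[n-1]` with exactly `k-1` descents. -/
theorem hypersimplex_volume_eq_eulerian (n k : ℕ) (hk : 0 < k) (hkn : k < n) :
    (Nat.factorial (n - 1) : ENNReal) *
      volume {x : Fin (n - 1) → ℝ |
        (∀ i, 0 ≤ x i ∧ x i ≤ 1) ∧ (k - 1 : ℝ) ≤ ∑ i, x i ∧ ∑ i, x i ≤ (k : ℝ)} =
    ((Finset.univ.filter
        (fun w : Equiv.Perm (Fin (n - 1)) => numDescents w = k - 1)).card : ENNReal) :=
  HSAux.key (n - 1) k (by omega) hk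
end

section
/- Let ψ: [0,1]^{n-1} → [0,1]^{n-1} be defined by ψ(x_1,…,x_{n-1}) = (y_1,…,y_{n-1}) where y_i = (x_1+⋯+x_i) - ⌊x_1+⋯+x_i⌋. If ψ(x) lies in the open simplex ∇_w = {0 < y_{w(1)} < ⋯ < y_{w(n-1)} < 1} for some permutation w of {1,…,n-1}, then ⌊x_1+⋯+x_{n-1}⌋ equals the number of descents of w^{-1}. -/
/-- Partial sums. -/
def psum {m : ℕ} (x : Fin m → ℝ) (i : Fin m) : ℝ :=
  ∑ j ∈ Finset.univ.filter (fun j : Fin m => j ≤ i), x j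

lemma psum_succ {m : ℕ} (x : Fin m → ℝ) (i : ℕ) (hi : i + 1 < m) :
    psum x ⟨i + 1, hi⟩ = psum x ⟨i, Nat.lt_of_succ_lt hi⟩ + x ⟨i + 1, hi⟩ := by
  unfold psum
  have hset : Finset.univ.filter (fun j : Fin m => j ≤ (⟨i + 1, hi⟩ : Fin m))
      = insert (⟨i + 1, hi⟩ : Fin m)
          (Finset.univ.filter (fun j : Fin m => j ≤ (⟨i, Nat.lt_of_succ_lt hi⟩ : Fin m))) := by
    ext j
    simp only [Finset.mem_filter, Finset.mem_insert, Finset.mem_univ, true_and, Fin.le_def,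
      Fin.ext_iff]
    omega
  rw [hset, Finset.sum_insert (by simp [Fin.le_def])]
  ring

lemma psum_zero {m : ℕ} (x : Fin m → ℝ) (h : 0 < m) :
    psum x ⟨0, h⟩ = x ⟨0, h⟩ := by
  unfold psum
  have : Finset.univ.filter (fun j : Fin m => j ≤ (⟨0, h⟩ : Fin m)) = {(⟨0, h⟩ : Fin m)} := by
    ext j; simp [Fin.le_def, Fin.ext_iff, Nat.le_zero]
  rw [this, Finset.sum_singleton]

lemma psum_last {m : ℕ} (x : Fin m → ℝ) (h : 0 < m) :
    psum x ⟨m - 1, by omega⟩ = ∑ i, x i := by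
  unfold psum
  congr 1
  ext j
  simp only [Finset.mem_filter, Finset.mem_univ, true_and, Fin.le_def, iff_true]
  have := j.isLt
  omega

theorem aux_floor_sum {m : ℕ} (x : Fin m → ℝ)
    (hx : ∀ i, 0 ≤ x i ∧ x i ≤ 1) (w : Equiv.Perm (Fin m))
    (y : Fin m → ℝ)
    (hy : ∀ i, y i = Int.fract (∑ j ∈ Finset.univ.filter (fun j : Fin m => j ≤ i), x j))
    (hmem : (∀ i, 0 < y i ∧ y i < 1) ∧ ∀ i j : Fin m, i < j → y (w i) < y (w j)) :
    ⌊∑ i, x i⌋ = (numDescents w⁻¹ : ℤ) := by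
  rcases Nat.eq_zero_or_pos m with h0 | hmpos
  · subst h0
    simp [numDescents]
  have hy' : ∀ i, y i = Int.fract (psum x i) := hy
  have hcmp : ∀ a b : Fin m, y a < y b ↔ w⁻¹ a < w⁻¹ b := by
    intro a b
    constructor
    · intro h
      rcases lt_trichotomy (w⁻¹ a) (w⁻¹ b) with h' | h' | h'
      · exact h'
      · exfalso; rw [show a = b from by simpa using congrArg w h'] at h; exact lt_irrefl _ h
      · have := hmem.2 _ _ h'
        simp only [Equiv.Perm.coe_inv, Equiv.apply_symm_apply] at this
        exact absurd h (not_lt.2 this.le)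
    · intro h
      have := hmem.2 _ _ h
      simpa using this
  set D : Finset (Fin m) := Finset.univ.filter (fun i : Fin m =>
    (i : ℕ) + 1 < m ∧ w⁻¹ ⟨((i : ℕ) + 1) % m, Nat.mod_lt _ i.pos⟩ < w⁻¹ i) with hD
  have hfloor : ∀ (i : ℕ) (hi : i + 1 < m),
      ⌊psum x ⟨i + 1, hi⟩⌋ = ⌊psum x ⟨i, Nat.lt_of_succ_lt hi⟩⌋ +
        (if w⁻¹ ⟨i + 1, hi⟩ < w⁻¹ ⟨i, Nat.lt_of_succ_lt hi⟩ then 1 else 0) := by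
    intro i hi
    set a : Fin m := ⟨i, Nat.lt_of_succ_lt hi⟩ with ha
    set b : Fin m := ⟨i + 1, hi⟩ with hb
    have hya : psum x a = ⌊psum x a⌋ + y a := by rw [hy' a]; exact (Int.floor_add_fract (psum x a)).symm
    have hyb : psum x b = ⌊psum x b⌋ + y b := by rw [hy' b]; exact (Int.floor_add_fract (psum x b)).symm
    have hsum := psum_succ x i hi
    have hkey : (⌊psum x b⌋ : ℝ) - ⌊psum x a⌋ = x b + y a - y b := by
      rw [hya, hyb] at hsum; linarith
    have hne : y a ≠ y b := by
      intro h
      have hab : a = b := by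
        rcases lt_trichotomy (w⁻¹ a) (w⁻¹ b) with h' | h' | h'
        · exact absurd ((hcmp a b).2 h') (by rw [h]; exact lt_irrefl _)
        · simpa using congrArg w h'
        · exact absurd ((hcmp b a).2 h') (by rw [h]; exact lt_irrefl _)
      have : i = i + 1 := congrArg Fin.val hab
      omega
    have h01a := hmem.1 a
    have h01b := hmem.1 b
    have hxb := hx b
    have hd : ⌊psum x b⌋ - ⌊psum x a⌋ = 0 ∨ ⌊psum x b⌋ - ⌊psum x a⌋ = 1 := by
      have h1 : ((-1 : ℤ) : ℝ) < ((⌊psum x b⌋ - ⌊psum x a⌋ : ℤ) : ℝ) := by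
        push_cast; rw [show (⌊psum x b⌋:ℝ) - ⌊psum x a⌋ = x b + y a - y b from hkey] at *
        linarith [hxb.1, h01a.1, h01b.2]
      have h2 : ((⌊psum x b⌋ - ⌊psum x a⌋ : ℤ) : ℝ) < ((2 : ℤ) : ℝ) := by
        push_cast
        linarith [hxb.2, h01a.2, h01b.1, hkey]
      have h1' : (-1 : ℤ) < ⌊psum x b⌋ - ⌊psum x a⌋ := by exact_mod_cast h1
      have h2' : ⌊psum x b⌋ - ⌊psum x a⌋ < (2 : ℤ) := by exact_mod_cast h2
      omega
    rcases hd with hd | hd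
    · have hd' : (⌊psum x b⌋ : ℝ) - ⌊psum x a⌋ = 0 := by
        have := congrArg (fun z : ℤ => (z : ℝ)) hd
        push_cast at this
        linarith
      have hxle : 0 ≤ y b - y a := by linarith [hxb.1, hkey]
      have hlt : y a < y b := lt_of_le_of_ne (by linarith) hne
      rw [if_neg (fun hcon => absurd ((hcmp b a).2 hcon) (not_lt.2 hlt.le))]
      omega
    · have hd' : (⌊psum x b⌋ : ℝ) - ⌊psum x a⌋ = 1 := by
        have := congrArg (fun z : ℤ => (z : ℝ)) hd
        push_cast at this
        linarith
      have hyle : y b ≤ y a := by linarith [hxb.2, hkey]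
      have hlt : y b < y a := lt_of_le_of_ne hyle hne.symm
      rw [if_pos ((hcmp b a).1 hlt)]
      omega
  have hbase : ⌊psum x ⟨0, hmpos⟩⌋ = 0 := by
    have h1 := psum_zero x hmpos
    have h01 := hmem.1 ⟨0, hmpos⟩
    have hfr := hy' ⟨0, hmpos⟩
    have hlt1 : psum x ⟨0, hmpos⟩ < 1 := by
      rcases lt_or_eq_of_le ((hx ⟨0, hmpos⟩).2) with h | h
      · rw [h1]; exact h
      · exfalso
        have : y ⟨0, hmpos⟩ = 0 := by rw [hfr, h1, h]; simp
        linarith [h01.1]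
    have hge0 : 0 ≤ psum x ⟨0, hmpos⟩ := by rw [h1]; exact (hx _).1
    exact Int.floor_eq_zero_iff.2 ⟨hge0, hlt1⟩
  have hmain : ∀ (i : ℕ) (hi : i < m),
      ⌊psum x ⟨i, hi⟩⌋ = ((D.filter (fun k : Fin m => (k : ℕ) < i)).card : ℤ) := by
    intro i
    induction i with
    | zero =>
      intro hi
      rw [hbase]
      simp
    | succ i ih =>
      intro hi
      have hi' : i < m := Nat.lt_of_succ_lt hi
      rw [hfloor i hi, ih hi']
      have hmem_iff : (⟨i, hi'⟩ : Fin m) ∈ D ↔ w⁻¹ ⟨i + 1, hi⟩ < w⁻¹ ⟨i, hi'⟩ := by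
        rw [hD]
        simp only [Finset.mem_filter, Finset.mem_univ, true_and]
        constructor
        · rintro ⟨-, h⟩
          convert h using 3
          simp [Nat.mod_eq_of_lt hi]
        · intro h
          refine ⟨hi, ?_⟩
          convert h using 3
          simp [Nat.mod_eq_of_lt hi]
      have hsplit : D.filter (fun k : Fin m => (k : ℕ) < i + 1)
          = if w⁻¹ ⟨i + 1, hi⟩ < w⁻¹ ⟨i, hi'⟩ then
              insert (⟨i, hi'⟩ : Fin m) (D.filter (fun k : Fin m => (k : ℕ) < i))
            else D.filter (fun k : Fin m => (k : ℕ) < i) := by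
      ---
        split_ifs with hc
        · ext k
          simp only [Finset.mem_filter, Finset.mem_insert]
          constructor
          · rintro ⟨hk, hlt⟩
            rcases Nat.lt_succ_iff_lt_or_eq.1 hlt with h | h
            · exact Or.inr ⟨hk, h⟩
            · exact Or.inl (Fin.ext h)
          · rintro (rfl | ⟨hk, hlt⟩)
            · exact ⟨hmem_iff.2 hc, Nat.lt_succ_self _⟩
            · exact ⟨hk, Nat.lt_succ_of_lt hlt⟩
        · ext k
          simp only [Finset.mem_filter]
          constructor
          · rintro ⟨hk, hlt⟩
            rcases Nat.lt_succ_iff_lt_or_eq.1 hlt with h | h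
            · exact ⟨hk, h⟩
            · exact absurd (hmem_iff.1 (by rwa [show (⟨i, hi'⟩ : Fin m) = k from (Fin.ext h.symm)])) hc
          · rintro ⟨hk, hlt⟩
            exact ⟨hk, Nat.lt_succ_of_lt hlt⟩
      rw [hsplit]
      split_ifs with hc
      · rw [Finset.card_insert_of_notMem (by simp)]
        push_cast; ring
      · simp
  have hlast := psum_last x hmpos
  rw [← hlast, hmain (m - 1) (by omega)]
  have hDfull : D.filter (fun k : Fin m => (k : ℕ) < m - 1) = D := by
    apply Finset.filter_true_of_mem
    intro k hk
    rw [hD] at hk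
    simp only [Finset.mem_filter] at hk
    omega
  rw [hDfull]
  rfl

/-- If `ψ(x) = y` with `y_i = fract(x_1 + ⋯ + x_i)` lies in the open simplex
`∇_w = {0 < y_{w(1)} < ⋯ < y_{w(n-1)} < 1}`, then `⌊x_1 + ⋯ + x_{n-1}⌋` equals the
number of descents of `w⁻¹`. -/
theorem floor_sum_eq_descents_of_inv (n : ℕ) (x : Fin (n - 1) → ℝ)
    (hx : ∀ i, 0 ≤ x i ∧ x i ≤ 1) (w : Equiv.Perm (Fin (n - 1)))
    (y : Fin (n - 1) → ℝ)
    (hy : ∀ i, y i = Int.fract (∑ j ∈ Finset.univ.filter (fun j : Fin (n - 1) => j ≤ i), x j))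
    (hmem : (∀ i, 0 < y i ∧ y i < 1) ∧ ∀ i j : Fin (n - 1), i < j → y (w i) < y (w j)) :
    ⌊∑ i, x i⌋ = (numDescents w⁻¹ : ℤ) := by
  exact aux_floor_sum x hx w y hy hmem
end

section
/- A permutation w ∈ S_n with w_n = n corresponds to a minimal circuit in the graph G_{k,n} if and only if the inverse permutation w^{-1} has exactly k-1 descents. Moreover, a minimal circuit is uniquely determined by its label sequence w modulo cyclic shifts. -/
/-- An edge of the graph `G_{k,n}`: the 0-1 vector `ε'` is obtained from `ε` by cyclically
shifting the `1` in position `i` one step to the right (position `i+1` must hold a `0`). -/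
def cyclicSucc {n : ℕ} (i : Fin n) : Fin n := ⟨((i : ℕ) + 1) % n, Nat.mod_lt _ i.pos⟩

def IsStep (n : ℕ) (ε ε' : Fin n → Bool) (i : Fin n) : Prop :=
  ε i = true ∧ ε (cyclicSucc i) = false ∧
  ε' = Function.update (Function.update ε i false) (cyclicSucc i) true

/-- A minimal circuit in `G_{k,n}` whose sequence of edge labels is `w 0, w 1, …, w (n-1)`:
a closed walk of length `n` through 0-1 vectors with exactly `k` ones, in which the step
at time `t` moves a `1` from position `w t` to position `w t + 1` (cyclically). -/
def IsCircuit (n k : ℕ) (w : Equiv.Perm (Fin n)) (v : Fin (n + 1) → Fin n → Bool) : Prop :=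
  v (Fin.last n) = v 0 ∧
  (Finset.univ.filter (fun i => v 0 i = true)).card = k ∧
  ∀ t : Fin n, IsStep n (v t.castSucc) (v t.succ) (w t)

namespace MC

variable {n : ℕ} [NeZero n]

lemma one_ne_zero' (hn : 1 < n) : (1 : Fin n) ≠ 0 := by
  intro h
  rw [Fin.ext_iff, Fin.val_one' n, Fin.val_zero, Nat.mod_eq_of_lt hn] at h
  omega

lemma cyclicSucc_eq_add_one (i : Fin n) : cyclicSucc i = i + 1 := by
  apply Fin.ext
  simp [cyclicSucc, Fin.val_add, Fin.val_one' n, Nat.add_mod]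

lemma cyclicSucc_sub_one (i : Fin n) : cyclicSucc (i - 1) = i := by
  rw [cyclicSucc_eq_add_one, sub_add_cancel]

lemma sub_one_ne (hn : 1 < n) (i : Fin n) : i - 1 ≠ i := by
  intro h
  rw [sub_eq_self] at h
  exact one_ne_zero' hn h

lemma cyclicSucc_ne (hn : 1 < n) (i : Fin n) : cyclicSucc i ≠ i := by
  rw [cyclicSucc_eq_add_one]
  intro h
  apply one_ne_zero' hn
  have : i + 1 = i + 0 := by rw [add_zero]; exact h
  exact add_left_cancel this

lemma cyclicSucc_inj {i j : Fin n} (h : cyclicSucc i = cyclicSucc j) : i = j := by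
  rw [cyclicSucc_eq_add_one, cyclicSucc_eq_add_one] at h
  exact add_right_cancel h

/-- `R w i` is the time at which the `1` leaves position `i`. -/
def R (w : Equiv.Perm (Fin n)) (i : Fin n) : ℕ := (w.symm i : ℕ)

/-- `S w i` is the time at which a `1` arrives at position `i`. -/
def S (w : Equiv.Perm (Fin n)) (i : Fin n) : ℕ := (w.symm (i - 1) : ℕ)

/-- The canonical circuit: state at time `t`, position `i`. -/
def V (w : Equiv.Perm (Fin n)) (t : ℕ) (i : Fin n) : Bool :=
  decide ((R w i < S w i) ↔ ((R w i < t) ↔ (S w i < t)))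

lemma R_lt (w : Equiv.Perm (Fin n)) (i : Fin n) : R w i < n := (w.symm i).isLt

lemma S_lt (w : Equiv.Perm (Fin n)) (i : Fin n) : S w i < n := (w.symm (i - 1)).isLt

lemma R_ne_S (hn : 1 < n) (w : Equiv.Perm (Fin n)) (i : Fin n) : R w i ≠ S w i := by
  intro h
  have : w.symm i = w.symm (i - 1) := Fin.ext h
  exact sub_one_ne hn i (w.symm.injective this.symm)

lemma R_eq_iff (w : Equiv.Perm (Fin n)) (i : Fin n) {t : ℕ} (ht : t < n) :
    R w i = t ↔ i = w ⟨t, ht⟩ := by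
  constructor
  · intro h
    have : w.symm i = ⟨t, ht⟩ := Fin.ext h
    rw [← this, Equiv.apply_symm_apply]
  · intro h
    rw [h, R, Equiv.symm_apply_apply]

lemma S_eq_iff (w : Equiv.Perm (Fin n)) (i : Fin n) {t : ℕ} (ht : t < n) :
    S w i = t ↔ i = cyclicSucc (w ⟨t, ht⟩) := by
  constructor
  · intro h
    have : w.symm (i - 1) = ⟨t, ht⟩ := Fin.ext h
    have h2 : i - 1 = w ⟨t, ht⟩ := by rw [← this, Equiv.apply_symm_apply]
    rw [← h2, cyclicSucc_sub_one]
  · intro h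
    have : i - 1 = w ⟨t, ht⟩ := by
      apply cyclicSucc_inj
      rw [cyclicSucc_sub_one, h]
    rw [S, this, Equiv.symm_apply_apply]

lemma V_zero (w : Equiv.Perm (Fin n)) (i : Fin n) :
    V w 0 i = decide (R w i < S w i) := by
  rw [V, decide_eq_decide]
  omega

lemma V_closed (w : Equiv.Perm (Fin n)) (i : Fin n) : V w n i = V w 0 i := by
  rw [V, V, decide_eq_decide]
  have := R_lt w i
  have := S_lt w i
  omega

/-- The canonical circuit performs a legal step at each time. -/
lemma isStep_V (hn : 1 < n) (w : Equiv.Perm (Fin n)) (t : ℕ) (ht : t < n) :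
    IsStep n (fun i => V w t i) (fun i => V w (t + 1) i) (w ⟨t, ht⟩) := by
  have hR : R w (w ⟨t, ht⟩) = t := (R_eq_iff w _ ht).mpr rfl
  have hS : S w (cyclicSucc (w ⟨t, ht⟩)) = t := (S_eq_iff w _ ht).mpr rfl
  have hSne : S w (w ⟨t, ht⟩) ≠ t := by
    intro h
    exact cyclicSucc_ne hn (w ⟨t, ht⟩) ((S_eq_iff w _ ht).mp h).symm
  have hRne : R w (cyclicSucc (w ⟨t, ht⟩)) ≠ t := by
    intro h
    exact cyclicSucc_ne hn (w ⟨t, ht⟩) ((R_eq_iff w _ ht).mp h)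
  refine ⟨?_, ?_, ?_⟩
  · simp only [V, decide_eq_true_eq, hR]
    omega
  · simp only [V, decide_eq_false_iff_not, hS]
    omega
  · funext j
    show V w (t + 1) j =
      Function.update (Function.update (fun i => V w t i) (w ⟨t, ht⟩) false)
        (cyclicSucc (w ⟨t, ht⟩)) true j
    rw [Function.update_apply, Function.update_apply]
    by_cases h1 : j = cyclicSucc (w ⟨t, ht⟩)
    · rw [if_pos h1, h1]
      simp only [V, decide_eq_true_eq, hS]
      have := hRne
      omega
    · rw [if_neg h1]
      by_cases h2 : j = w ⟨t, ht⟩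
      · rw [if_pos h2, h2]
        simp only [V, decide_eq_false_iff_not, hR]
        have := hSne
        omega
      · rw [if_neg h2]
        have hRj : R w j ≠ t := fun h => h2 ((R_eq_iff w j ht).mp h)
        have hSj : S w j ≠ t := fun h => h1 ((S_eq_iff w j ht).mp h)
        rw [V, V, decide_eq_decide]
        omega

/-- Before both relevant times, a circuit's value at position `i` is constant. -/
lemma circuit_const (hn : 1 < n) {k : ℕ} {w : Equiv.Perm (Fin n)}
    {v : Fin (n + 1) → Fin n → Bool} (hc : IsCircuit n k w v) (i : Fin n) :
    ∀ t : ℕ, ∀ ht : t < n + 1, t ≤ min (R w i) (S w i) → v ⟨t, ht⟩ i = v 0 i := by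
  intro t
  induction t with
  | zero =>
    intro ht _
    have e : (⟨0, ht⟩ : Fin (n + 1)) = 0 := Fin.ext (by simp)
    rw [e]
  | succ t ih =>
    intro ht hle
    have htR : t < R w i := by omega
    have htS : t < S w i := by omega
    have htn : t < n := lt_of_lt_of_le htR (le_of_lt (R_lt w i))
    have hstep := hc.2.2 ⟨t, htn⟩
    have e1 : (⟨t, htn⟩ : Fin n).castSucc = (⟨t, by omega⟩ : Fin (n + 1)) := rfl
    have e2 : (⟨t, htn⟩ : Fin n).succ = (⟨t + 1, ht⟩ : Fin (n + 1)) := rfl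
    rw [e1, e2] at hstep
    rw [hstep.2.2, Function.update_apply, Function.update_apply]
    have h1 : i ≠ cyclicSucc (w ⟨t, htn⟩) := by
      intro h
      have : S w i = t := (S_eq_iff w i htn).mpr h
      omega
    have h2 : i ≠ w ⟨t, htn⟩ := by
      intro h
      have : R w i = t := (R_eq_iff w i htn).mpr h
      omega
    rw [if_neg h1, if_neg h2]
    exact ih (by omega) (by omega)

/-- Any circuit starts at the canonical initial vector. -/
lemma circuit_zero (hn : 1 < n) {k : ℕ} {w : Equiv.Perm (Fin n)}
    {v : Fin (n + 1) → Fin n → Bool} (hc : IsCircuit n k w v) (i : Fin n) :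
    v 0 i = V w 0 i := by
  rw [V_zero]
  rcases lt_trichotomy (R w i) (S w i) with h | h | h
  · -- the 1 leaves before one arrives: initially true
    have hrn : R w i < n := R_lt w i
    have hstep := hc.2.2 ⟨R w i, hrn⟩
    have hwi : w ⟨R w i, hrn⟩ = i := by
      have hs : w.symm i = ⟨R w i, hrn⟩ := Fin.ext rfl
      rw [← hs, Equiv.apply_symm_apply]
    have e1 : (⟨R w i, hrn⟩ : Fin n).castSucc = (⟨R w i, by omega⟩ : Fin (n + 1)) := rfl
    rw [e1, hwi] at hstep
    have hconst := circuit_const hn hc i (R w i) (by omega) (by omega)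
    have hv0 : v 0 i = true := by rw [← hconst]; exact hstep.1
    rw [hv0]
    exact (decide_eq_true h).symm
  · exact absurd h (R_ne_S hn w i)
  · -- a 1 arrives before the 1 leaves: initially false
    have hsn : S w i < n := S_lt w i
    have hstep := hc.2.2 ⟨S w i, hsn⟩
    have hwi : cyclicSucc (w ⟨S w i, hsn⟩) = i := by
      have hs : w.symm (i - 1) = ⟨S w i, hsn⟩ := Fin.ext rfl
      have h2 : i - 1 = w ⟨S w i, hsn⟩ := by rw [← hs, Equiv.apply_symm_apply]
      rw [← h2, cyclicSucc_sub_one]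
    have e1 : (⟨S w i, hsn⟩ : Fin n).castSucc = (⟨S w i, by omega⟩ : Fin (n + 1)) := rfl
    rw [e1] at hstep
    have h21 := hstep.2.1
    rw [hwi] at h21
    have hconst := circuit_const hn hc i (S w i) (by omega) (by omega)
    have hv0 : v 0 i = false := by rw [← hconst]; exact h21
    rw [hv0]
    symm
    rw [decide_eq_false_iff_not]
    omega

/-- Any circuit coincides with the canonical circuit. -/
lemma circuit_eq (hn : 1 < n) {k : ℕ} {w : Equiv.Perm (Fin n)}
    {v : Fin (n + 1) → Fin n → Bool} (hc : IsCircuit n k w v) :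
    ∀ t : ℕ, ∀ ht : t < n + 1, ∀ i, v ⟨t, ht⟩ i = V w t i := by
  intro t
  induction t with
  | zero =>
    intro ht i
    have e : (⟨0, ht⟩ : Fin (n + 1)) = 0 := Fin.ext (by simp)
    rw [e]
    exact circuit_zero hn hc i
  | succ t ih =>
    intro ht i
    have htn : t < n := by omega
    have hstep := hc.2.2 ⟨t, htn⟩
    have e1 : (⟨t, htn⟩ : Fin n).castSucc = (⟨t, by omega⟩ : Fin (n + 1)) := rfl
    have e2 : (⟨t, htn⟩ : Fin n).succ = (⟨t + 1, ht⟩ : Fin (n + 1)) := rfl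
    rw [e1, e2] at hstep
    have hv : v (⟨t, by omega⟩ : Fin (n + 1)) = fun i => V w t i :=
      funext fun i => ih (by omega) i
    have hV := isStep_V hn w t htn
    rw [hstep.2.2, hv, ← hV.2.2]

end MC

open MC in
/-- The number of ones of the canonical initial vector is `numDescents w⁻¹ + 1`. -/
lemma card_V {n : ℕ} [NeZero n] (hn : 1 < n) (w : Equiv.Perm (Fin n))
    (hw : w ⟨n - 1, by omega⟩ = ⟨n - 1, by omega⟩) :
    (Finset.univ.filter (fun i => V w 0 i = true)).card = numDescents w⁻¹ + 1 := by
  classical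
  have hlast : n - 1 < n := by omega
  set lastF : Fin n := ⟨n - 1, hlast⟩ with hlastF
  have hsymm : w.symm lastF = lastF := w.symm_apply_eq.mpr hw.symm
  have hmem : ∀ i : Fin n, V w 0 i = true ↔ (w.symm i : ℕ) < (w.symm (i - 1) : ℕ) := by
    intro i
    rw [V_zero, decide_eq_true_eq]
    exact Iff.rfl
  -- B : set of cyclic descent positions of w.symm
  set B : Finset (Fin n) :=
    Finset.univ.filter (fun j => (w.symm (cyclicSucc j) : ℕ) < (w.symm j : ℕ)) with hB
  have hcardB : (Finset.univ.filter (fun i => V w 0 i = true)).card = B.card := by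
    refine Finset.card_bij' (fun i _ => i - 1) (fun j _ => j + 1) ?_ ?_ ?_ ?_
    · intro i hi
      rw [Finset.mem_filter] at hi ⊢
      refine ⟨Finset.mem_univ _, ?_⟩
      rw [cyclicSucc_sub_one]
      exact (hmem i).mp hi.2
    · intro j hj
      rw [Finset.mem_filter] at hj ⊢
      refine ⟨Finset.mem_univ _, ?_⟩
      rw [hmem]
      rw [cyclicSucc_eq_add_one] at hj
      have hjj : j + 1 - 1 = j := add_sub_cancel_right j 1
      rw [hjj]
      exact hj.2
    · intro i _
      exact sub_add_cancel i 1
    · intro j _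
      exact add_sub_cancel_right j 1
  -- D : descent set of w⁻¹
  set D : Finset (Fin n) := Finset.univ.filter (fun i : Fin n =>
    (i : ℕ) + 1 < n ∧ w⁻¹ ⟨((i : ℕ) + 1) % n, Nat.mod_lt _ i.pos⟩ < w⁻¹ i) with hD
  have hinv : ∀ x : Fin n, w⁻¹ x = w.symm x := fun _ => rfl
  have hBD : B = insert lastF D := by
    ext j
    rw [Finset.mem_insert, hB, hD, Finset.mem_filter, Finset.mem_filter]
    by_cases hj : j = lastF
    · subst hj
      simp only [true_or, iff_true, Finset.mem_univ, true_and]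
      have hcs : cyclicSucc lastF = (0 : Fin n) := by
        apply Fin.ext
        show ((n - 1) + 1) % n = ((0 : Fin n) : ℕ)
        rw [Nat.sub_add_cancel (by omega), Nat.mod_self, Fin.val_zero]
      rw [hcs, hsymm]
      have hne : w.symm (0 : Fin n) ≠ lastF := by
        intro h
        have h2 := congrArg w h
        rw [Equiv.apply_symm_apply, hw] at h2
        have h3 := congrArg Fin.val h2
        rw [Fin.val_zero] at h3
        have h4 : (lastF : ℕ) = n - 1 := rfl
        omega
      have hle : ((w.symm (0 : Fin n)) : ℕ) < n := (w.symm (0 : Fin n)).isLt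
      have hne' : ((w.symm (0 : Fin n)) : ℕ) ≠ n - 1 := fun h => hne (Fin.ext h)
      show ((w.symm (0 : Fin n)) : ℕ) < n - 1
      omega
    · have hjv : (j : ℕ) + 1 < n := by
        have h1 : (j : ℕ) < n := j.isLt
        have h2 : (j : ℕ) ≠ n - 1 := fun h => hj (Fin.ext h)
        omega
      have hcs : (⟨((j : ℕ) + 1) % n, Nat.mod_lt _ j.pos⟩ : Fin n) = cyclicSucc j := rfl
      constructor
      · intro h
        right
        refine ⟨Finset.mem_univ _, hjv, ?_⟩
        rw [hinv, hinv, hcs, Fin.lt_def]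
        exact h.2
      · intro h
        rcases h with h | h
        · exact absurd h hj
        · refine ⟨Finset.mem_univ _, ?_⟩
          have := h.2.2
          rw [hinv, hinv, hcs, Fin.lt_def] at this
          exact this
  have hnotmem : lastF ∉ D := by
    rw [hD, Finset.mem_filter]
    intro h
    have := h.2.1
    simp [hlastF] at this
    omega
  rw [hcardB, hBD, Finset.card_insert_of_notMem hnotmem]
  rfl

/-- A permutation `w ∈ S_n` with `w_n = n` corresponds to a minimal circuit in `G_{k,n}`
iff `w⁻¹` has exactly `k-1` descents; moreover the minimal circuit is uniquely
determined by its label sequence `w`. -/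
theorem minimal_circuit_iff_descents (n k : ℕ) (hn : 1 < n) (hk : 0 < k) (hkn : k < n)
    (w : Equiv.Perm (Fin n)) (hw : w ⟨n - 1, by omega⟩ = ⟨n - 1, by omega⟩) :
    ((∃ v, IsCircuit n k w v) ↔ numDescents w⁻¹ = k - 1) ∧
    (∀ v v', IsCircuit n k w v → IsCircuit n k w v' → v = v') := by
  haveI : NeZero n := ⟨by omega⟩
  open MC in
  constructor
  · constructor
    · rintro ⟨v, hv⟩
      have hz : ∀ i, v 0 i = V w 0 i := circuit_zero hn hv
      have hcard := hv.2.1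
      have : (Finset.univ.filter (fun i => V w 0 i = true)).card = k := by
        rw [← hcard]
        congr 1
        apply Finset.filter_congr
        intro i _
        rw [hz i]
      rw [card_V hn w hw] at this
      omega
    · intro hd
      refine ⟨fun t i => V w (t : ℕ) i, ?_, ?_, ?_⟩
      · funext i
        show V w ((Fin.last n : Fin (n + 1)) : ℕ) i = V w ((0 : Fin (n + 1)) : ℕ) i
        rw [Fin.val_last, Fin.val_zero]
        exact V_closed w i
      · have e : ((0 : Fin (n + 1)) : ℕ) = 0 := rfl
        simp only [e]
        rw [card_V hn w hw]
        omega
      · intro t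
        have := isStep_V hn w (t : ℕ) t.isLt
        have ht : w ⟨(t : ℕ), t.isLt⟩ = w t := by congr 1
        rw [ht] at this
        exact this
  · intro v v' hv hv'
    funext t i
    have h1 := circuit_eq hn hv (t : ℕ) t.isLt i
    have h2 := circuit_eq hn hv' (t : ℕ) t.isLt i
    have ht : (⟨(t : ℕ), t.isLt⟩ : Fin (n + 1)) = t := rfl
    rw [ht] at h1 h2
    rw [h1, h2]
end

section
/- Let Π = Π(a_1,…,a_r) be the partition of [n] into consecutive intervals of sizes a_1,…,a_r, and b, c ∈ ℕ^r. Then the matroid M_{Π,b,c,k} on [n] is sort-closed: for any two bases I, J, both U(I,J) and V(I,J) are bases. -/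
/-- The nondecreasing rearrangement of the multiset union `I ∪ J`. -/
def sortList (I J : Finset ℕ) : List ℕ := Multiset.sort (I.val + J.val) (· ≤ ·)

/-- `U(I,J)`: the odd-position (1st, 3rd, …) entries of `sort(I ∪ J)`. -/
def sortU (I J : Finset ℕ) : Finset ℕ :=
  (((List.range (sortList I J).length).filter (fun t => t % 2 = 0)).map
    (fun t => (sortList I J).getD t 0)).toFinset

/-- `V(I,J)`: the even-position (2nd, 4th, …) entries of `sort(I ∪ J)`. -/
def sortV (I J : Finset ℕ) : Finset ℕ :=
  (((List.range (sortList I J).length).filter (fun t => t % 2 = 1)).map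
    (fun t => (sortList I J).getD t 0)).toFinset

/-- Interleaving condition `i_1 ≤ j_1 ≤ i_2 ≤ j_2 ≤ ⋯ ≤ i_k ≤ j_k` for two finite
sets of the same cardinality, via their increasing enumerations. -/
def Interleaved (A B : Finset ℕ) : Prop :=
  A.card = B.card ∧
  (∀ t, t < A.card → (A.sort (· ≤ ·)).getD t 0 ≤ (B.sort (· ≤ ·)).getD t 0) ∧
  (∀ t, t + 1 < A.card → (B.sort (· ≤ ·)).getD t 0 ≤ (A.sort (· ≤ ·)).getD (t + 1) 0)

/-- The `j`-th consecutive interval of `[n]` (0-based) for interval sizes `a_1, …, a_r`. -/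
def intervalPart (r : ℕ) (a : Fin r → ℕ) (j : Fin r) : Finset ℕ :=
  Finset.Ico (∑ t ∈ Finset.univ.filter (· < j), a t)
    (∑ t ∈ Finset.univ.filter (· ≤ j), a t)

/-- Bases of `M_{Π,b,c,k}` for the interval partition `Π(a_1,…,a_r)`. -/
def IntervalBase (r k : ℕ) (a : Fin r → ℕ) (b c : Fin r → ℕ) (I : Finset ℕ) : Prop :=
  I ⊆ Finset.range (∑ j, a j) ∧ I.card = k ∧
  ∀ j, b j ≤ (I ∩ intervalPart r a j).card ∧ (I ∩ intervalPart r a j).card ≤ c j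

/-- number of `t < m` with `t % 2 = ε`. -/
lemma aux_mod_card (ε : ℕ) (hε : ε < 2) (m : ℕ) :
    ((Finset.range m).filter (fun t => t % 2 = ε)).card = (m + 1 - ε) / 2 := by
  induction m with
  | zero => interval_cases ε <;> simp
  | succ m ih =>
    rw [Finset.range_add_one, Finset.filter_insert]
    by_cases h : m % 2 = ε
    · rw [if_pos h, Finset.card_insert_of_notMem (by simp)]
      omega
    · rw [if_neg h]
      omega

/-- a downward-closed finite set of naturals is an initial segment. -/
lemma aux_dc (S : Finset ℕ) (h : ∀ s t : ℕ, s ≤ t → t ∈ S → s ∈ S) (t : ℕ) :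
    t ∈ S ↔ t < S.card := by
  constructor
  · intro ht
    have hsub : Finset.range (t + 1) ⊆ S := fun s hs =>
      h s t (Nat.lt_succ_iff.mp (Finset.mem_range.mp hs)) ht
    have := Finset.card_le_card hsub
    simpa using this
  · intro ht
    by_contra hts
    have hsub : S ⊆ Finset.range t := by
      intro s hs
      rw [Finset.mem_range]
      by_contra hst
      exact hts (h t s (le_of_not_gt hst) hs)
    have := Finset.card_le_card hsub
    simp at this
    omega

lemma sel_base (r k : ℕ) (a b c : Fin r → ℕ) (I J : Finset ℕ)
    (hI : IntervalBase r k a b c I) (hJ : IntervalBase r k a b c J) (ε : ℕ) (hε : ε < 2) :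
    IntervalBase r k a b c
      ((((List.range (sortList I J).length).filter (fun t => t % 2 = ε)).map
        (fun t => (sortList I J).getD t 0)).toFinset) := by
  obtain ⟨hIsub, hIcard, hIint⟩ := hI
  obtain ⟨hJsub, hJcard, hJint⟩ := hJ
  set L := sortList I J with hLdef
  set N := L.length with hNdef
  set f : ℕ → ℕ := fun t => L.getD t 0 with hfdef
  have hLM : (L : Multiset ℕ) = I.val + J.val := Multiset.sort_eq _ _
  have hN2k : N = 2 * k := by
    have h := congrArg Multiset.card hLM
    simp only [Multiset.coe_card, Multiset.card_add] at h
    have hi : Multiset.card I.val = k := hIcard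
    have hj : Multiset.card J.val = k := hJcard
    rw [hNdef, h, hi, hj]
    ring
  have hsorted : L.Pairwise (· ≤ ·) := Multiset.pairwise_sort _ _
  have hmono : ∀ s t : ℕ, s ≤ t → t < N → f s ≤ f t := by
    intro s t hst ht
    rcases eq_or_lt_of_le hst with rfl | h
    · exact le_refl _
    · have h2 := (List.pairwise_iff_getElem.mp hsorted) s t (lt_trans h ht) ht h
      show L.getD s 0 ≤ L.getD t 0
      rw [List.getD_eq_getElem L 0 (lt_trans h ht), List.getD_eq_getElem L 0 ht]
      exact h2
  -- multiplicity at most 2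
  have hcount : ∀ v : ℕ, L.count v ≤ 2 := by
    intro v
    have h1 : (L : Multiset ℕ).count v = I.val.count v + J.val.count v := by
      rw [hLM, Multiset.count_add]
    rw [Multiset.coe_count] at h1
    have h2 : I.val.count v ≤ 1 := Multiset.nodup_iff_count_le_one.mp I.nodup v
    have h3 : J.val.count v ≤ 1 := Multiset.nodup_iff_count_le_one.mp J.nodup v
    omega
  have hstrict : ∀ t : ℕ, t + 2 < N → f t < f (t + 2) := by
    intro t ht
    by_contra hle
    push_neg at hle
    have e1 : f (t + 1) = f t :=
      le_antisymm (le_trans (hmono (t+1) (t+2) (by omega) ht) hle) (hmono t (t+1) (by omega) (by omega))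
    have e2 : f (t + 2) = f t := le_antisymm hle (hmono t (t+2) (by omega) ht)
    have hdrop : L.drop t = f t :: f t :: f t :: L.drop (t + 3) := by
      rw [List.drop_eq_getElem_cons (show t < L.length by omega),
        List.drop_eq_getElem_cons (show t + 1 < L.length by omega),
        List.drop_eq_getElem_cons (show t + 2 < L.length by omega)]
      congr 1
      · exact (List.getD_eq_getElem L 0 (show t < L.length by omega)).symm
      congr 1
      · rw [← List.getD_eq_getElem L 0 (show t + 1 < L.length by omega)]
        exact e1
      congr 1
      · rw [← List.getD_eq_getElem L 0 (show t + 2 < L.length by omega)]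
        exact e2
    have h3 : 3 ≤ (L.drop t).count (f t) := by
      rw [hdrop]
      simp [List.count_cons]
    have := List.Sublist.count_le (f t) (List.drop_sublist t L)
    have := hcount (f t)
    omega
  have hLmap : L = (List.range N).map f := by
    apply List.ext_getElem (by simp [hNdef])
    intro i h1 h2
    simp only [List.getElem_map, List.getElem_range, hfdef]
    exact (List.getD_eq_getElem L 0 h1).symm
  -- cumulative counts
  set cnt : ℕ → ℕ := fun y => Multiset.card ((I.val + J.val).filter (· < y)) with hcntdef
  have hcntL : ∀ y, cnt y = ((Finset.range N).filter (fun t => f t < y)).card := by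
    intro y
    have : ((Finset.range N).filter (fun t => f t < y)).card
        = ((List.range N).filter (fun t => decide (f t < y))).length := rfl
    rw [this, ← List.countP_eq_length_filter]
    have : cnt y = (L.filter (fun v => decide (v < y))).length := by
      rw [hcntdef, ← hLM]
      simp [Multiset.filter_coe]
    rw [this, hLmap, List.filter_map, List.length_map, List.countP_eq_length_filter]
    rfl
  have hcnt_le : ∀ y, cnt y ≤ N := by
    intro y
    rw [hcntL]
    calc ((Finset.range N).filter (fun t => f t < y)).card ≤ (Finset.range N).card :=
      Finset.card_le_card (Finset.filter_subset _ _)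
    _ = N := Finset.card_range N
  have hkey : ∀ y t : ℕ, t < N → (f t < y ↔ t < cnt y) := by
    intro y t htN
    have hdc : ∀ s u : ℕ, s ≤ u → u ∈ (Finset.range N).filter (fun t => f t < y) →
        s ∈ (Finset.range N).filter (fun t => f t < y) := by
      intro s u hsu hu
      rw [Finset.mem_filter, Finset.mem_range] at hu ⊢
      exact ⟨lt_of_le_of_lt hsu hu.1, lt_of_le_of_lt (hmono s u hsu hu.1) hu.2⟩
    have := aux_dc _ hdc t
    rw [Finset.mem_filter, Finset.mem_range, ← hcntL] at this
    constructor
    · intro h; exact this.mp ⟨htN, h⟩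
    · intro h; exact (this.mpr h).2
  -- additivity over an interval
  have hadd : ∀ x y : ℕ, x ≤ y →
      cnt y = cnt x + (I ∩ Finset.Ico x y).card + (J ∩ Finset.Ico x y).card := by
    intro x y hxy
    have hIcap : ∀ K : Finset ℕ, (K ∩ Finset.Ico x y).card
        = Multiset.card (K.val.filter (fun v => x ≤ v ∧ v < y)) := by
      intro K
      rw [← Finset.filter_mem_eq_inter]
      have h0 : (K.filter (· ∈ Finset.Ico x y)).card
          = Multiset.card (K.val.filter (· ∈ Finset.Ico x y)) := rfl
      rw [h0]
      congr 1
      apply Multiset.filter_congr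
      intro v _
      simp [Finset.mem_Ico]
    have hsplit : ∀ M : Multiset ℕ,
        Multiset.card (M.filter (· < y))
          = Multiset.card (M.filter (· < x)) + Multiset.card (M.filter (fun v => x ≤ v ∧ v < y)) := by
      intro M
      have h1 : M.filter (· < x) + M.filter (fun v => x ≤ v ∧ v < y)
          = M.filter (fun v => v < x ∨ (x ≤ v ∧ v < y)) + M.filter (fun v => v < x ∧ (x ≤ v ∧ v < y)) :=
        Multiset.filter_add_filter _ _ M
      have h2 : M.filter (fun v => v < x ∨ (x ≤ v ∧ v < y)) = M.filter (· < y) := by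
        apply Multiset.filter_congr
        intro v _
        constructor
        · rintro (h | h)
          · omega
          · omega
        · intro h; omega
      have h3 : M.filter (fun v => v < x ∧ (x ≤ v ∧ v < y)) = 0 := by
        rw [Multiset.filter_eq_nil]
        intro v _ h
        omega
      have := congrArg Multiset.card h1
      rw [h2, h3] at this
      simp at this
      omega
    rw [hIcap I, hIcap J, hcntdef]
    simp only []
    rw [hsplit (I.val + J.val), Multiset.filter_add, Multiset.filter_add]
    simp [hcntdef]
    omega
  have hcnt_mono : ∀ x y : ℕ, x ≤ y → cnt x ≤ cnt y := by
    intro x y hxy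
    have := hadd x y hxy
    omega
  -- the selected list
  set idx : List ℕ := (List.range N).filter (fun t => t % 2 = ε) with hidxdef
  set l : List ℕ := idx.map f with hldef
  have hidx_mem : ∀ t ∈ idx, t < N ∧ t % 2 = ε := by
    intro t ht
    rw [hidxdef, List.mem_filter, List.mem_range] at ht
    simpa using ht
  have hpair : l.Pairwise (· < ·) := by
    rw [hldef, List.pairwise_map]
    have h0 : idx.Pairwise (· < ·) := (List.pairwise_lt_range (n := N)).sublist (List.filter_sublist (p := _))
    apply h0.imp_of_mem
    intro s t hs ht hst
    obtain ⟨hsN, hsε⟩ := hidx_mem s hs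
    obtain ⟨htN, htε⟩ := hidx_mem t ht
    have h2 : s + 2 ≤ t := by omega
    exact lt_of_lt_of_le (hstrict s (by omega)) (hmono (s+2) t h2 htN)
  have hnodup : l.Nodup := hpair.imp (fun h => ne_of_lt h)
  -- counting the selection inside an interval [x, y)
  have hselcount : ∀ x y : ℕ, x ≤ y →
      (l.toFinset ∩ Finset.Ico x y).card = (cnt y + 1 - ε) / 2 - (cnt x + 1 - ε) / 2 := by
    intro x y hxy
    have einter : l.toFinset ∩ Finset.Ico x y
        = (l.filter (fun v => decide (v ∈ Finset.Ico x y))).toFinset := by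
      ext v
      simp only [Finset.mem_inter, List.mem_toFinset, List.mem_filter, decide_eq_true_eq]
    rw [einter, List.toFinset_card_of_nodup (hnodup.filter _)]
    have e1 : l.filter (fun v => decide (v ∈ Finset.Ico x y))
        = (idx.filter (fun t => decide (f t ∈ Finset.Ico x y))).map f := by
      rw [hldef, List.filter_map]
      rfl
    rw [e1, List.length_map]
    have e2 : idx.filter (fun t => decide (f t ∈ Finset.Ico x y))
        = (List.range N).filter (fun t => decide (t % 2 = ε) && decide (f t ∈ Finset.Ico x y)) := by
      rw [hidxdef, List.filter_filter]
      congr 1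
      funext t
      rw [Bool.and_comm]
    rw [e2]
    have e3 : ((List.range N).filter (fun t => decide (t % 2 = ε) && decide (f t ∈ Finset.Ico x y))).length
        = ((Finset.range N).filter (fun t => t % 2 = ε ∧ f t ∈ Finset.Ico x y)).card := by
      have hfn : (fun t => decide (t % 2 = ε) && decide (f t ∈ Finset.Ico x y))
          = (fun t => decide (t % 2 = ε ∧ f t ∈ Finset.Ico x y)) := by
        funext t
        simp
      rw [hfn]
      rfl
    rw [e3]
    have e4 : (Finset.range N).filter (fun t => t % 2 = ε ∧ f t ∈ Finset.Ico x y)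
        = (Finset.Ico (cnt x) (cnt y)).filter (fun t => t % 2 = ε) := by
      ext t
      simp only [Finset.mem_filter, Finset.mem_range, Finset.mem_Ico]
      constructor
      · rintro ⟨htN, htε, hx, hy⟩
        refine ⟨⟨?_, (hkey y t htN).mp hy⟩, htε⟩
        by_contra h
        push_neg at h
        exact absurd ((hkey x t htN).mpr h) (by omega)
      · rintro ⟨⟨hx, hy⟩, htε⟩
        have htN : t < N := lt_of_lt_of_le hy (hcnt_le y)
        refine ⟨htN, htε, ?_, (hkey y t htN).mpr hy⟩
        by_contra h
        push_neg at h
        have := (hkey x t htN).mp h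
        omega
    rw [e4]
    have e5 : (Finset.Ico (cnt x) (cnt y)).filter (fun t => t % 2 = ε)
        = ((Finset.range (cnt y)).filter (fun t => t % 2 = ε)) \
          ((Finset.range (cnt x)).filter (fun t => t % 2 = ε)) := by
      ext t
      simp only [Finset.mem_filter, Finset.mem_Ico, Finset.mem_sdiff, Finset.mem_range]
      constructor
      · rintro ⟨⟨h1, h2⟩, h3⟩
        exact ⟨⟨h2, h3⟩, by omega⟩
      · rintro ⟨⟨h1, h2⟩, h3⟩
        constructor
        · constructor
          · by_contra h; push_neg at h; exact h3 ⟨by omega, h2⟩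
          · exact h1
        · exact h2
    rw [e5, Finset.card_sdiff_of_subset (by
      intro t ht
      simp only [Finset.mem_filter, Finset.mem_range] at ht ⊢
      exact ⟨lt_of_lt_of_le ht.1 (hcnt_mono x y hxy |> fun h => h), ht.2⟩ )]
    rw [aux_mod_card ε hε, aux_mod_card ε hε]
  -- total cardinality
  have htotcard : l.toFinset.card = k := by
    rw [List.toFinset_card_of_nodup hnodup, hldef, List.length_map]
    have : idx.length = ((Finset.range N).filter (fun t => t % 2 = ε)).card := rfl
    rw [this, aux_mod_card ε hε]
    omega
  -- membership in range n
  have hsubn : l.toFinset ⊆ Finset.range (∑ j, a j) := by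
    intro v hv
    rw [List.mem_toFinset, hldef, List.mem_map] at hv
    obtain ⟨t, ht, rfl⟩ := hv
    obtain ⟨htN, -⟩ := hidx_mem t ht
    have hmem : f t ∈ L := by
      rw [hfdef]
      simp only []
      rw [List.getD_eq_getElem L 0 htN]
      exact List.getElem_mem _
    have : f t ∈ (L : Multiset ℕ) := hmem
    rw [hLM, Multiset.mem_add] at this
    rcases this with h | h
    · exact hIsub h
    · exact hJsub h
  refine ⟨hsubn, htotcard, ?_⟩
  intro j
  have hyx : (∑ t ∈ Finset.univ.filter (· ≤ j), a t)
      = (∑ t ∈ Finset.univ.filter (· < j), a t) + a j := by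
    have : Finset.univ.filter (· ≤ j) = insert j (Finset.univ.filter (· < j)) := by
      ext t
      simp only [Finset.mem_filter, Finset.mem_univ, true_and, Finset.mem_insert]
      rw [Fin.le_def, Fin.lt_def]
      constructor
      · intro h
        rcases eq_or_lt_of_le h with h' | h'
        · left; exact Fin.ext h'
        · right; exact h'
      · rintro (rfl | h)
        · exact le_refl _
        · exact le_of_lt h
    rw [this, Finset.sum_insert (by simp)]
    ring
  set x := ∑ t ∈ Finset.univ.filter (· < j), a t with hxdef
  set y := ∑ t ∈ Finset.univ.filter (· ≤ j), a t with hydef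
  have hxy : x ≤ y := by omega
  have hIj := hIint j
  have hJj := hJint j
  rw [intervalPart] at hIj hJj ⊢
  rw [← hxdef, ← hydef] at hIj hJj ⊢
  have hv := hadd x y hxy
  have hsel := hselcount x y hxy
  rw [hsel]
  set p := (I ∩ Finset.Ico x y).card
  set q := (J ∩ Finset.Ico x y).card
  omega

/-- The matroid `M_{Π,b,c,k}` for a partition of `[n]` into consecutive intervals is
sort-closed: for any two bases `I, J`, both `U(I,J)` and `V(I,J)` are bases. -/
theorem interval_matroid_sort_closed (r k : ℕ) (a b c : Fin r → ℕ)
    (I J : Finset ℕ) (hI : IntervalBase r k a b c I) (hJ : IntervalBase r k a b c J) :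
    IntervalBase r k a b c (sortU I J) ∧ IntervalBase r k a b c (sortV I J) := by
  exact ⟨sel_base r k a b c I J hI hJ 0 (by norm_num),
    sel_base r k a b c I J hI hJ 1 (by norm_num)⟩
end

section
/- Let M be the transversal matroid on [n] given by cyclic intervals S_1,…,S_k of [n] (bases are the k-subsets {i_1,…,i_k} with i_s ∈ S_s for some system of distinct representatives). Then M is sort-closed: for any two bases I, J, both U(I,J) and V(I,J) are bases. -/
/-- A cyclic interval of `[n]` (0-based, indices mod `n`). -/
def IsCyclicInterval (n : ℕ) (S : Finset ℕ) : Prop :=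
  ∃ s m : ℕ, m ≤ n ∧ S = (Finset.range m).image (fun t => (s + t) % n)

/-- Bases of the transversal matroid given by sets `S_1, …, S_k`: the `k`-subsets
admitting a system of distinct representatives. -/
def TransversalBase (n k : ℕ) (S : Fin k → Finset ℕ) (I : Finset ℕ) : Prop :=
  I ⊆ Finset.range n ∧ I.card = k ∧
  ∃ f : Fin k → ℕ, Function.Injective f ∧ Finset.image f Finset.univ = I ∧ ∀ s, f s ∈ S s

/-! ### Auxiliary list lemmas -/

lemma getD_mem_of_lt (l : List ℕ) (t : ℕ) (ht : t < l.length) : l.getD t 0 ∈ l := by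
  rw [List.getD_eq_getElem?_getD, List.getElem?_eq_getElem ht]
  exact List.getElem_mem ht

lemma sorted_getD_lt_iff (l : List ℕ) (hl : l.Pairwise (· ≤ ·)) (c : ℕ) :
    ∀ t, t < l.length → (l.getD t 0 < c ↔ t < l.countP (· < c)) := by
  induction l with
  | nil => intro t ht; simp at ht
  | cons a l ih =>
    rw [List.pairwise_cons] at hl
    intro t ht
    have hz : ¬ a < c → l.countP (fun x => decide (x < c)) = 0 := by
      intro hac
      rw [List.countP_eq_zero]
      intro b hb
      simpa using fun h => hac (lt_of_le_of_lt (hl.1 b hb) h)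
    cases t with
    | zero =>
      simp only [List.getD_cons_zero, List.countP_cons]
      constructor
      · intro h; simp [h]
      · intro h
        by_contra hac
        rw [hz hac] at h
        simp [hac] at h
    | succ t =>
      simp only [List.getD_cons_succ, List.countP_cons, List.length_cons] at *
      by_cases hac : a < c
      · rw [ih hl.2 t (by omega)]; simp [hac]
      · rw [hz hac]
        simp only [hac]
        constructor
        · intro h
          exact absurd (lt_of_le_of_lt (hl.1 _ (getD_mem_of_lt l t (by omega))) h) hac
        · intro h; simp at h

/-! ### The sorted union and its counting function -/

def mmc (I J : Finset ℕ) (c : ℕ) : ℕ := (I.filter (· < c)).card + (J.filter (· < c)).card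

lemma sortList_sorted (I J : Finset ℕ) : (sortList I J).Pairwise (· ≤ ·) :=
  Multiset.pairwise_sort _ _

lemma sortList_length (I J : Finset ℕ) : (sortList I J).length = I.card + J.card := by
  rw [sortList, Multiset.length_sort, Multiset.card_add]; rfl

lemma filter_card_eq_countP (I : Finset ℕ) (p : ℕ → Prop) [DecidablePred p] :
    (I.filter p).card = I.val.countP (fun x => decide (p x)) := by
  rw [Finset.card_def, Finset.filter_val, Multiset.countP_eq_card_filter]; simp

lemma sortList_countP (I J : Finset ℕ) (c : ℕ) :
    (sortList I J).countP (fun x => decide (x < c)) = mmc I J c := by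
  have h : ((sortList I J : List ℕ) : Multiset ℕ) = I.val + J.val := Multiset.sort_eq _ _
  rw [mmc, filter_card_eq_countP, filter_card_eq_countP, ← Multiset.countP_add, ← h,
    Multiset.coe_countP]
  simp

lemma getD_lt_iff (I J : Finset ℕ) (c t : ℕ) (ht : t < (sortList I J).length) :
    (sortList I J).getD t 0 < c ↔ t < mmc I J c := by
  rw [sorted_getD_lt_iff _ (sortList_sorted I J) c t ht, sortList_countP]

lemma mmc_mono (I J : Finset ℕ) {c c' : ℕ} (h : c ≤ c') : mmc I J c ≤ mmc I J c' := by
  unfold mmc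
  have sub : ∀ K : Finset ℕ, K.filter (· < c) ⊆ K.filter (· < c') := fun K => by
    intro x hx
    simp only [Finset.mem_filter] at hx ⊢
    exact ⟨hx.1, by omega⟩
  have := Finset.card_le_card (sub I)
  have := Finset.card_le_card (sub J)
  omega

lemma mmc_succ (I J : Finset ℕ) (v : ℕ) : mmc I J (v + 1) ≤ mmc I J v + 2 := by
  have h1 : I.filter (· < v + 1) ⊆ insert v (I.filter (· < v)) := by
    intro x hx
    simp only [Finset.mem_filter, Finset.mem_insert] at hx ⊢
    by_cases hxv : x = v
    · exact Or.inl hxv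
    · exact Or.inr ⟨hx.1, by omega⟩
  have h2 : J.filter (· < v + 1) ⊆ insert v (J.filter (· < v)) := by
    intro x hx
    simp only [Finset.mem_filter, Finset.mem_insert] at hx ⊢
    by_cases hxv : x = v
    · exact Or.inl hxv
    · exact Or.inr ⟨hx.1, by omega⟩
  have := Finset.card_le_card h1
  have := Finset.card_le_card h2
  have := Finset.card_insert_le v (I.filter (· < v))
  have := Finset.card_insert_le v (J.filter (· < v))
  unfold mmc; omega

lemma getD_ne_of_far (I J : Finset ℕ) (t t' : ℕ) (h2 : t + 2 ≤ t')
    (ht' : t' < (sortList I J).length) :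
    (sortList I J).getD t 0 ≠ (sortList I J).getD t' 0 := by
  intro heq
  set v := (sortList I J).getD t 0 with hv
  have ht : t < (sortList I J).length := by omega
  have h1 : mmc I J v ≤ t := by
    by_contra h
    have := (getD_lt_iff I J v t ht).mpr (by omega)
    omega
  have h3 : t' < mmc I J (v + 1) := by
    rw [← getD_lt_iff I J (v+1) t' ht', ← heq]; omega
  have := mmc_succ I J v
  omega

/-! ### Counting entries at even/odd positions -/

lemma length_filter_range_window (N u v ε : ℕ) (hε : ε < 2) :
    ((List.range N).filter (fun t => decide (t % 2 = ε ∧ u ≤ t ∧ t < v))).length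
      = (min v N + 1 - ε) / 2 - (u + 1 - ε) / 2 := by
  induction N with
  | zero => simp; omega
  | succ N ih =>
    rw [List.range_succ, List.filter_append, List.length_append]
    rw [ih]
    by_cases h1 : N % 2 = ε ∧ u ≤ N ∧ N < v
    · simp only [List.filter_cons, List.filter_nil, h1]
      simp
      omega
    · simp only [List.filter_cons, List.filter_nil, decide_eq_true_eq, h1, if_false]
      simp
      omega

def parityList (I J : Finset ℕ) (ε : ℕ) : List ℕ :=
  ((List.range (sortList I J).length).filter (fun t => t % 2 = ε)).map
    (fun t => (sortList I J).getD t 0)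

def parityFinset (I J : Finset ℕ) (ε : ℕ) : Finset ℕ := (parityList I J ε).toFinset

lemma parityList_nodup (I J : Finset ℕ) (ε : ℕ) : (parityList I J ε).Nodup := by
  apply List.Nodup.map_on _ (List.Nodup.filter _ List.nodup_range)
  intro t ht t' ht' heq
  simp only [List.mem_filter, List.mem_range, decide_eq_true_eq] at ht ht'
  by_contra hne
  rcases Nat.lt_or_ge t t' with h | h
  · exact getD_ne_of_far I J t t' (by omega) ht'.1 heq
  · exact getD_ne_of_far I J t' t (by omega) ht.1 heq.symm

lemma parityList_length (I J : Finset ℕ) (ε : ℕ) (hε : ε < 2) :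
    (parityList I J ε).length = ((sortList I J).length + 1 - ε) / 2 := by
  rw [parityList, List.length_map]
  have h := length_filter_range_window (sortList I J).length 0 (sortList I J).length ε hε
  rw [min_self] at h
  have he : List.filter (fun t => decide (t % 2 = ε)) (List.range (sortList I J).length)
      = List.filter (fun t => decide (t % 2 = ε ∧ 0 ≤ t ∧ t < (sortList I J).length))
        (List.range (sortList I J).length) := by
    apply List.filter_congr
    intro t ht
    simp only [List.mem_range] at ht
    simp only [decide_eq_decide]
    omega
  rw [he, h]
  omega

lemma parityFinset_card (I J : Finset ℕ) (ε : ℕ) (hε : ε < 2) :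
    (parityFinset I J ε).card = ((sortList I J).length + 1 - ε) / 2 := by
  rw [parityFinset, List.toFinset_card_of_nodup (parityList_nodup I J ε),
    parityList_length I J ε hε]

lemma parityFinset_inter_card (I J : Finset ℕ) (ε : ℕ) (hε : ε < 2) (T : Finset ℕ)
    (a b : ℕ) (hmem : ∀ t, t < (sortList I J).length →
      ((sortList I J).getD t 0 ∈ T ↔ (mmc I J a ≤ t ∧ t < mmc I J b))) :
    (parityFinset I J ε ∩ T).card
      = (min (mmc I J b) (sortList I J).length + 1 - ε) / 2 - (mmc I J a + 1 - ε) / 2 := by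
  classical
  have hfin : parityFinset I J ε ∩ T = ((parityList I J ε).filter (· ∈ T)).toFinset := by
    ext x
    simp [parityFinset, List.mem_filter]
  rw [hfin, List.toFinset_card_of_nodup (List.Nodup.filter _ (parityList_nodup I J ε))]
  rw [parityList, List.filter_map, List.length_map, List.filter_filter]
  rw [← length_filter_range_window (sortList I J).length (mmc I J a) (mmc I J b) ε hε]
  congr 1
  apply List.filter_congr
  intro t ht
  simp only [List.mem_range] at ht
  rw [Bool.eq_iff_iff]
  simp only [Bool.and_eq_true, decide_eq_true_eq, Function.comp_apply]
  rw [hmem t ht]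
  tauto

/-! ### Normal form for cyclic intervals -/

lemma add_mod_cases {n s t : ℕ} (hs : s < n) (ht : t ≤ n) :
    (s + t) % n = s + t - (if s + t < n then 0 else n) := by
  split_ifs with h
  · simp [Nat.mod_eq_of_lt h]
  · rw [Nat.mod_eq_sub_mod (by omega), Nat.mod_eq_of_lt (by omega)]

lemma isCyclicInterval_Ico (n a b : ℕ) (hb : b ≤ n) : IsCyclicInterval n (Finset.Ico a b) := by
  refine ⟨a, b - a, by omega, ?_⟩
  ext x
  simp only [Finset.mem_Ico, Finset.mem_image, Finset.mem_range]
  constructor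
  · intro hx
    exact ⟨x - a, by omega, by rw [Nat.mod_eq_of_lt (by omega)]; omega⟩
  · rintro ⟨t, ht, rfl⟩
    rw [Nat.mod_eq_of_lt (by omega)]
    omega

lemma isCyclicInterval_compl_Ico (n a b : ℕ) (ha : a ≤ b) (hb : b ≤ n) :
    IsCyclicInterval n (Finset.range n \ Finset.Ico a b) := by
  refine ⟨b, n - b + a, by omega, ?_⟩
  ext x
  simp only [Finset.mem_sdiff, Finset.mem_range, Finset.mem_Ico, Finset.mem_image, not_and,
    not_lt]
  constructor
  · intro ⟨hxn, hx⟩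
    rcases Nat.lt_or_ge x a with h | h
    · refine ⟨x + n - b, by omega, ?_⟩
      have : b + (x + n - b) = n + x := by omega
      rw [this, Nat.add_mod_left, Nat.mod_eq_of_lt hxn]
    · have hbx := hx h
      refine ⟨x - b, by omega, ?_⟩
      rw [Nat.mod_eq_of_lt (by omega)]
      omega
  · rintro ⟨t, ht, rfl⟩
    rcases Nat.lt_or_ge (b + t) n with h | h
    · rw [Nat.mod_eq_of_lt h]
      omega
    · rw [Nat.mod_eq_sub_mod h, Nat.mod_eq_of_lt (by omega)]
      omega

lemma cyclicInterval_normal_form {n : ℕ} (hn : 0 < n) {S : Finset ℕ}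
    (hS : IsCyclicInterval n S) :
    ∃ a b, a ≤ b ∧ b ≤ n ∧
      (S = Finset.Ico a b ∨ S = Finset.range n \ Finset.Ico a b) := by
  obtain ⟨s, m, hm, rfl⟩ := hS
  have hs : s % n < n := Nat.mod_lt _ hn
  have himg : (Finset.range m).image (fun t => (s + t) % n)
      = (Finset.range m).image (fun t => (s % n + t) % n) := by
    apply Finset.image_congr
    intro t _
    exact (Nat.mod_add_mod s n t).symm
  rw [himg]
  set a := s % n with ha
  rcases le_or_gt (a + m) n with hcase | hcase
  · refine ⟨a, a + m, by omega, by omega, Or.inl ?_⟩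
    ext x
    simp only [Finset.mem_image, Finset.mem_range, Finset.mem_Ico]
    constructor
    · rintro ⟨t, ht, rfl⟩
      rw [Nat.mod_eq_of_lt (by omega)]
      omega
    · intro hx
      exact ⟨x - a, by omega, by rw [Nat.mod_eq_of_lt (by omega)]; omega⟩
  · refine ⟨a + m - n, a, by omega, by omega, Or.inr ?_⟩
    ext x
    simp only [Finset.mem_image, Finset.mem_range, Finset.mem_sdiff, Finset.mem_Ico, not_and,
      not_lt]
    constructor
    · rintro ⟨t, ht, rfl⟩
      rw [add_mod_cases hs (by omega)]
      split_ifs with h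
      · constructor
        · omega
        · intro _; omega
      · constructor
        · omega
        · intro h2; omega
    · rintro ⟨hxn, hx⟩
      rcases Nat.lt_or_ge x (a + m - n) with h | h
      · refine ⟨x + n - a, by omega, ?_⟩
        have : a + (x + n - a) = n + x := by omega
        rw [this, Nat.add_mod_left, Nat.mod_eq_of_lt hxn]
      · have hbx : a ≤ x := by
          by_contra hc
          have := hx (by omega)
          omega
        refine ⟨x - a, by omega, ?_⟩
        rw [Nat.mod_eq_of_lt (by omega)]
        omega

/-! ### Unions of overlapping cyclic intervals -/

lemma arc_union_mixed {n : ℕ} (a b c d x : ℕ) (hb : b ≤ n) (hc : c ≤ d) (hd : d ≤ n)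
    (hx1 : a ≤ x ∧ x < b) (hx2 : x ∈ Finset.range n \ Finset.Ico c d) :
    IsCyclicInterval n (Finset.Ico a b ∪ (Finset.range n \ Finset.Ico c d)) := by
  simp only [Finset.mem_sdiff, Finset.mem_range, Finset.mem_Ico, not_and, not_lt] at hx2
  have hcd : x < c ∨ d ≤ x := by omega
  rcases hcd with h | h
  · have he : Finset.Ico a b ∪ (Finset.range n \ Finset.Ico c d)
        = Finset.range n \ Finset.Ico (max c (min b d)) d := by
      ext y
      simp only [Finset.mem_union, Finset.mem_sdiff, Finset.mem_range, Finset.mem_Ico,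
        not_and, not_lt, max_le_iff, le_min_iff, min_le_iff, le_max_iff]
      omega
    rw [he]
    exact isCyclicInterval_compl_Ico n _ d (by omega) hd
  · have he : Finset.Ico a b ∪ (Finset.range n \ Finset.Ico c d)
        = Finset.range n \ Finset.Ico c (min d (max a c)) := by
      ext y
      simp only [Finset.mem_union, Finset.mem_sdiff, Finset.mem_range, Finset.mem_Ico,
        not_and, not_lt, max_le_iff, le_min_iff, min_le_iff, le_max_iff]
      omega
    rw [he]
    exact isCyclicInterval_compl_Ico n c _ (by omega) (by omega)

lemma arc_union {n : ℕ} (hn : 0 < n) {A B : Finset ℕ} (hA : IsCyclicInterval n A)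
    (hB : IsCyclicInterval n B) (hAB : ¬ Disjoint A B) : IsCyclicInterval n (A ∪ B) := by
  obtain ⟨x, hxA, hxB⟩ := Finset.not_disjoint_iff.mp hAB
  obtain ⟨a, b, hab, hbn, hA'⟩ := cyclicInterval_normal_form hn hA
  obtain ⟨c, d, hcd, hdn, hB'⟩ := cyclicInterval_normal_form hn hB
  rcases hA' with rfl | rfl <;> rcases hB' with rfl | rfl
  · simp only [Finset.mem_Ico] at hxA hxB
    have he : Finset.Ico a b ∪ Finset.Ico c d = Finset.Ico (min a c) (max b d) := by
      ext y
      simp only [Finset.mem_union, Finset.mem_Ico, min_le_iff, lt_max_iff]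
      omega
    rw [he]
    exact isCyclicInterval_Ico n _ _ (by omega)
  · simp only [Finset.mem_Ico] at hxA
    exact arc_union_mixed a b c d x hbn hcd hdn hxA hxB
  · simp only [Finset.mem_Ico] at hxB
    rw [Finset.union_comm]
    exact arc_union_mixed c d a b x hdn hab hbn hxB hxA
  · by_cases hmm : max a c ≤ min b d
    · have he : (Finset.range n \ Finset.Ico a b) ∪ (Finset.range n \ Finset.Ico c d)
          = Finset.range n \ Finset.Ico (max a c) (min b d) := by
        ext y
        simp only [Finset.mem_union, Finset.mem_sdiff, Finset.mem_range, Finset.mem_Ico,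
          not_and, not_lt, max_le_iff, le_min_iff]
        omega
      rw [he]
      exact isCyclicInterval_compl_Ico n _ _ hmm (by omega)
    · have he : (Finset.range n \ Finset.Ico a b) ∪ (Finset.range n \ Finset.Ico c d)
          = Finset.range n \ Finset.Ico 0 0 := by
        ext y
        simp only [Finset.mem_union, Finset.mem_sdiff, Finset.mem_range, Finset.mem_Ico,
          not_and, not_lt]
        omega
      rw [he]
      exact isCyclicInterval_compl_Ico n 0 0 le_rfl (by omega)

/-! ### Decomposition of a union of cyclic intervals into disjoint ones -/

open Finset in
lemma arc_decomposition {n : ℕ} (hn : 0 < n) {k : ℕ} (S : Fin k → Finset ℕ)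
    (hS : ∀ s, IsCyclicInterval n (S s)) (R : Finset (Fin k)) :
    ∃ P : Finset (Finset (Fin k)),
      P.biUnion id = R ∧
      (∀ p ∈ P, p.Nonempty ∧ IsCyclicInterval n (p.biUnion S)) ∧
      (∀ p ∈ P, ∀ q ∈ P, p ≠ q → Disjoint (p.biUnion S) (q.biUnion S)) := by
  classical
  induction R using Finset.strongInduction with
  | _ R ih =>
    rcases R.eq_empty_or_nonempty with rfl | ⟨r, hr⟩
    · exact ⟨∅, by simp, by simp, by simp⟩
    obtain ⟨P₀, hP₀U, hP₀p, hP₀d⟩ := ih (R.erase r) (Finset.erase_ssubset hr)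
    set Q := P₀.filter (fun p => ¬ Disjoint (p.biUnion S) (S r)) with hQ
    have hQsub : Q ⊆ P₀ := Finset.filter_subset _ _
    set c := insert r (Q.biUnion id) with hc
    have hmemP₀ : ∀ p ∈ P₀, p ⊆ R.erase r := by
      intro p hp
      rw [← hP₀U]
      exact Finset.subset_biUnion_of_mem id hp
    have hrc : ∀ p ∈ P₀, r ∉ p := by
      intro p hp hrp
      exact (Finset.notMem_erase r R) (hmemP₀ p hp hrp)
    have hcne : ∀ p ∈ P₀, c ≠ p := by
      intro p hp he
      exact hrc p hp (he ▸ Finset.mem_insert_self r _)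
    have hcS : c.biUnion S = S r ∪ Q.biUnion (fun p => p.biUnion S) := by
      rw [hc, Finset.biUnion_insert, Finset.biUnion_biUnion]
      rfl
    have harc : ∀ Q' ⊆ Q, IsCyclicInterval n (S r ∪ Q'.biUnion (fun p => p.biUnion S)) := by
      intro Q'
      induction Q' using Finset.induction_on with
      | empty => intro _; simpa using hS r
      | @insert p Q'' hp ih2 =>
        intro hins
        have hpQ : p ∈ Q := hins (Finset.mem_insert_self _ _)
        have hQ'' : Q'' ⊆ Q := fun x hx => hins (Finset.mem_insert_of_mem hx)
        have heq : S r ∪ (insert p Q'').biUnion (fun p => p.biUnion S)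
            = (S r ∪ Q''.biUnion (fun p => p.biUnion S)) ∪ p.biUnion S := by
          rw [Finset.biUnion_insert]
          ext x
          simp only [Finset.mem_union]
          tauto
        rw [heq]
        apply arc_union hn (ih2 hQ'') ((hP₀p p (hQsub hpQ)).2)
        have hnd : ¬ Disjoint (p.biUnion S) (S r) := (Finset.mem_filter.mp hpQ).2
        intro hd
        exact hnd (Finset.disjoint_of_subset_right (Finset.subset_union_left) hd.symm)
    refine ⟨insert c (P₀ \ Q), ?_, ?_, ?_⟩
    · rw [Finset.biUnion_insert]
      have h1 : Q ∪ (P₀ \ Q) = P₀ := Finset.union_sdiff_of_subset hQsub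
      show (insert r (Q.biUnion id)) ∪ (P₀ \ Q).biUnion id = R
      have h2 : Q.biUnion id ∪ (P₀ \ Q).biUnion id = P₀.biUnion id := by
        ext x
        simp only [Finset.mem_union, Finset.mem_biUnion, Finset.mem_sdiff]
        constructor
        · rintro (⟨p, hp, hx⟩ | ⟨p, hp, hx⟩)
          · exact ⟨p, hQsub hp, hx⟩
          · exact ⟨p, hp.1, hx⟩
        · rintro ⟨p, hp, hx⟩
          by_cases hpQ : p ∈ Q
          · exact Or.inl ⟨p, hpQ, hx⟩
          · exact Or.inr ⟨p, ⟨hp, hpQ⟩, hx⟩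
      rw [Finset.insert_eq, Finset.union_assoc, h2, hP₀U,
        ← Finset.insert_eq, Finset.insert_erase hr]
    · intro p hp
      rcases Finset.mem_insert.mp hp with rfl | hp'
      · refine ⟨⟨r, Finset.mem_insert_self _ _⟩, ?_⟩
        rw [hcS]
        exact harc Q le_rfl
      · exact hP₀p p (Finset.mem_sdiff.mp hp').1
    · intro p hp q hq hne
      have key : ∀ q' ∈ P₀ \ Q, Disjoint (c.biUnion S) (q'.biUnion S) := by
        intro q' hq'
        obtain ⟨hq'P₀, hq'Q⟩ := Finset.mem_sdiff.mp hq'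
        rw [hcS]
        apply Finset.disjoint_union_left.mpr
        constructor
        · have : Disjoint (q'.biUnion S) (S r) := by
            by_contra hcon
            exact hq'Q (Finset.mem_filter.mpr ⟨hq'P₀, hcon⟩)
          exact this.symm
        · rw [Finset.disjoint_biUnion_left]
          intro p' hp'
          apply hP₀d p' (hQsub hp') q' hq'P₀
          intro he
          exact hq'Q (he ▸ hp')
      rcases Finset.mem_insert.mp hp with rfl | hp' <;>
        rcases Finset.mem_insert.mp hq with rfl | hq'
      · exact absurd rfl hne
      · exact key q hq'
      · exact (key p hp').symm
      · exact hP₀d p (Finset.mem_sdiff.mp hp').1 q (Finset.mem_sdiff.mp hq').1 hne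

/-! ### The key counting inequality -/

lemma mmc_le_length (I J : Finset ℕ) (c : ℕ) : mmc I J c ≤ (sortList I J).length := by
  rw [sortList_length, mmc]
  have := Finset.card_filter_le I (· < c)
  have := Finset.card_filter_le J (· < c)
  omega

lemma mem_parityFinset {I J : Finset ℕ} {ε : ℕ} {x : ℕ} :
    x ∈ parityFinset I J ε ↔ ∃ t, t < (sortList I J).length ∧ t % 2 = ε ∧
      (sortList I J).getD t 0 = x := by
  simp [parityFinset, parityList, List.mem_filter]
  tauto

lemma parityFinset_subset_range {n : ℕ} {I J : Finset ℕ} (hIn : I ⊆ Finset.range n)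
    (hJn : J ⊆ Finset.range n) (ε : ℕ) : parityFinset I J ε ⊆ Finset.range n := by
  intro x hx
  obtain ⟨t, ht, -, rfl⟩ := mem_parityFinset.mp hx
  have hmn : mmc I J n = (sortList I J).length := by
    rw [sortList_length, mmc]
    rw [Finset.filter_true_of_mem, Finset.filter_true_of_mem]
    · intro x hx; exact Finset.mem_range.mp (hJn hx)
    · intro x hx; exact Finset.mem_range.mp (hIn hx)
  rw [Finset.mem_range, getD_lt_iff I J n t ht, hmn]
  exact ht

lemma card_inter_Ico_aux (K : Finset ℕ) (a b : ℕ) (hab : a ≤ b) :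
    (K ∩ Finset.Ico a b).card + (K.filter (· < a)).card = (K.filter (· < b)).card := by
  classical
  have h1 : K ∩ Finset.Ico a b = K.filter (fun x => a ≤ x ∧ x < b) := by
    ext x
    simp [Finset.mem_inter, Finset.mem_filter, Finset.mem_Ico]
  have h2 : K.filter (· < b) = K.filter (· < a) ∪ K.filter (fun x => a ≤ x ∧ x < b) := by
    ext x
    simp only [Finset.mem_union, Finset.mem_filter]
    by_cases hK : x ∈ K <;> simp [hK] <;> omega
  have h3 : Disjoint (K.filter (· < a)) (K.filter (fun x => a ≤ x ∧ x < b)) := by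
    rw [Finset.disjoint_filter]
    intro x _ hx
    omega
  rw [h1, h2, Finset.card_union_of_disjoint h3]
  omega

lemma card_inter_compl (n : ℕ) (K : Finset ℕ) (hK : K ⊆ Finset.range n) (T0 : Finset ℕ) :
    (K ∩ (Finset.range n \ T0)).card + (K ∩ T0).card = K.card := by
  classical
  have h1 : K ∩ (Finset.range n \ T0) = K \ (K ∩ T0) := by
    ext x
    simp only [Finset.mem_inter, Finset.mem_sdiff, Finset.mem_range]
    by_cases hx : x ∈ K
    · simp [hx, Finset.mem_range.mp (hK hx)]
    · simp [hx]
  rw [h1]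
  have h2 : K ∩ T0 ⊆ K := Finset.inter_subset_left
  rw [Finset.card_sdiff_of_subset h2]
  have := Finset.card_le_card h2
  omega

lemma min_card_le_parity {n : ℕ} (hn : 0 < n) {I J : Finset ℕ}
    (hIn : I ⊆ Finset.range n) (hJn : J ⊆ Finset.range n) (hcard : I.card = J.card)
    (ε : ℕ) (hε : ε < 2) {T : Finset ℕ} (hT : IsCyclicInterval n T) :
    min ((I ∩ T).card) ((J ∩ T).card) ≤ (parityFinset I J ε ∩ T).card := by
  obtain ⟨a, b, hab, hbn, hT'⟩ := cyclicInterval_normal_form hn hT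
  set L := (sortList I J).length with hL
  have hLIJ : L = I.card + J.card := sortList_length I J
  have hmab : mmc I J a ≤ mmc I J b := mmc_mono I J hab
  have hmbL : mmc I J b ≤ L := mmc_le_length I J b
  have hmaL : mmc I J a ≤ L := mmc_le_length I J a
  have hIa := card_inter_Ico_aux I a b hab
  have hJa := card_inter_Ico_aux J a b hab
  have hIf : (I.filter (· < a)).card ≤ (I.filter (· < b)).card ∧
      (I.filter (· < b)).card ≤ I.card := by
    constructor
    · have := mmc_mono I (∅ : Finset ℕ) hab
      simp [mmc] at this
      exact this
    · exact Finset.card_filter_le _ _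
  have hJf : (J.filter (· < a)).card ≤ (J.filter (· < b)).card ∧
      (J.filter (· < b)).card ≤ J.card := by
    constructor
    · have := mmc_mono J (∅ : Finset ℕ) hab
      simp [mmc] at this
      exact this
    · exact Finset.card_filter_le _ _
  have hmmca : mmc I J a = (I.filter (· < a)).card + (J.filter (· < a)).card := rfl
  have hmmcb : mmc I J b = (I.filter (· < b)).card + (J.filter (· < b)).card := rfl
  have hmemIco : ∀ t, t < L →
      ((sortList I J).getD t 0 ∈ Finset.Ico a b ↔ (mmc I J a ≤ t ∧ t < mmc I J b)) := by
    intro t ht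
    rw [Finset.mem_Ico]
    have h1 := getD_lt_iff I J a t ht
    have h2 := getD_lt_iff I J b t ht
    omega
  have hPIco := parityFinset_inter_card I J ε hε (Finset.Ico a b) a b hmemIco
  rw [min_eq_left hmbL] at hPIco
  rw [hmmca, hmmcb] at hPIco
  rcases hT' with rfl | rfl
  · rw [hPIco]
    rcases le_total ((I ∩ Finset.Ico a b).card) ((J ∩ Finset.Ico a b).card) with h | h
    · rw [min_eq_left h]
      interval_cases ε <;> omega
    · rw [min_eq_right h]
      interval_cases ε <;> omega
  · have hPc := card_inter_compl n (parityFinset I J ε) (parityFinset_subset_range hIn hJn ε)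
      (Finset.Ico a b)
    have hIc := card_inter_compl n I hIn (Finset.Ico a b)
    have hJc := card_inter_compl n J hJn (Finset.Ico a b)
    have hPcard := parityFinset_card I J ε hε
    rw [hPIco] at hPc
    rw [← hL, hLIJ] at hPcard
    rcases le_total ((I ∩ (Finset.range n \ Finset.Ico a b)).card)
      ((J ∩ (Finset.range n \ Finset.Ico a b)).card) with h | h
    · rw [min_eq_left h]
      interval_cases ε <;> omega
    · rw [min_eq_right h]
      interval_cases ε <;> omega

/-! ### Putting everything together: the Hall condition -/

lemma hall_of_base {n k : ℕ} {S : Fin k → Finset ℕ} {I : Finset ℕ}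
    (hI : TransversalBase n k S I) (R : Finset (Fin k)) :
    R.card ≤ (I ∩ R.biUnion S).card := by
  classical
  obtain ⟨hIn, hIc, f, hfinj, hfim, hfS⟩ := hI
  have hsub : R.image f ⊆ I ∩ R.biUnion S := by
    intro x hx
    obtain ⟨r, hr, rfl⟩ := Finset.mem_image.mp hx
    refine Finset.mem_inter.mpr ⟨?_, ?_⟩
    · rw [← hfim]
      exact Finset.mem_image_of_mem f (Finset.mem_univ r)
    · exact Finset.subset_biUnion_of_mem S hr (hfS r)
  calc R.card = (R.image f).card := (Finset.card_image_of_injective R hfinj).symm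
    _ ≤ _ := Finset.card_le_card hsub

lemma transversalBase_parity {n k : ℕ} (hn : 0 < n) (S : Fin k → Finset ℕ)
    (hS : ∀ s, IsCyclicInterval n (S s))
    {I J : Finset ℕ} (hI : TransversalBase n k S I) (hJ : TransversalBase n k S J)
    (ε : ℕ) (hε : ε < 2) : TransversalBase n k S (parityFinset I J ε) := by
  classical
  obtain ⟨hIn, hIc, f, hfinj, hfim, hfS⟩ := hI
  obtain ⟨hJn, hJc, g, hginj, hgim, hgS⟩ := hJ
  have hSne : ∀ s, (S s).Nonempty := fun s => ⟨f s, hfS s⟩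
  have hPcard : (parityFinset I J ε).card = k := by
    rw [parityFinset_card I J ε hε, sortList_length, hIc, hJc]
    omega
  have hall : ∀ R : Finset (Fin k),
      R.card ≤ (R.biUnion fun r => S r ∩ parityFinset I J ε).card := by
    intro R
    obtain ⟨P, hPU, hPp, hPd⟩ := arc_decomposition hn S hS R
    have hpd : ∀ p ∈ P, ∀ q ∈ P, p ≠ q → Disjoint (p : Finset (Fin k)) q := by
      intro p hp q hq hne
      rw [Finset.disjoint_left]
      intro r hrp hrq
      obtain ⟨x, hx⟩ := hSne r
      have h1 : x ∈ p.biUnion S := Finset.mem_biUnion.mpr ⟨r, hrp, hx⟩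
      have h2 : x ∈ q.biUnion S := Finset.mem_biUnion.mpr ⟨r, hrq, hx⟩
      exact Finset.disjoint_left.mp (hPd p hp q hq hne) h1 h2
    have hcardR : R.card = ∑ p ∈ P, p.card := by
      rw [← hPU]
      exact Finset.card_biUnion hpd
    have hbee : R.biUnion (fun r => S r ∩ parityFinset I J ε)
        = P.biUnion (fun p => p.biUnion S ∩ parityFinset I J ε) := by
      rw [← Finset.biUnion_inter, ← hPU, Finset.biUnion_biUnion, Finset.biUnion_inter]
      rfl
    rw [hbee, Finset.card_biUnion (fun p hp q hq hne =>
      Finset.disjoint_of_subset_left Finset.inter_subset_left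
        (Finset.disjoint_of_subset_right Finset.inter_subset_left (hPd p hp q hq hne)))]
    · rw [hcardR]
      apply Finset.sum_le_sum
      intro p hp
      have h1 : p.card ≤ (I ∩ p.biUnion S).card :=
        hall_of_base ⟨hIn, hIc, f, hfinj, hfim, hfS⟩ p
      have h2 : p.card ≤ (J ∩ p.biUnion S).card :=
        hall_of_base ⟨hJn, hJc, g, hginj, hgim, hgS⟩ p
      have h3 := min_card_le_parity hn hIn hJn (by rw [hIc, hJc]) ε hε (hPp p hp).2
      rw [Finset.inter_comm]
      omega
  obtain ⟨f', hf'inj, hf'mem⟩ :=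
    (Finset.all_card_le_biUnion_card_iff_exists_injective
      (fun s => S s ∩ parityFinset I J ε)).mp hall
  refine ⟨parityFinset_subset_range hIn hJn ε, hPcard, f', hf'inj, ?_, fun s =>
    (Finset.mem_inter.mp (hf'mem s)).1⟩
  have hsub : Finset.image f' Finset.univ ⊆ parityFinset I J ε := by
    intro x hx
    obtain ⟨s, _, rfl⟩ := Finset.mem_image.mp hx
    exact (Finset.mem_inter.mp (hf'mem s)).2
  apply Finset.eq_of_subset_of_card_le hsub
  rw [hPcard, Finset.card_image_of_injective _ hf'inj, Finset.card_univ, Fintype.card_fin]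

/-- A transversal matroid given by cyclic intervals `S_1, …, S_k` of `[n]` is
sort-closed: for any two bases `I, J`, both `U(I,J)` and `V(I,J)` are bases. -/
theorem cyclically_transversal_sort_closed (n k : ℕ) (S : Fin k → Finset ℕ)
    (hS : ∀ s, IsCyclicInterval n (S s))
    (I J : Finset ℕ) (hI : TransversalBase n k S I) (hJ : TransversalBase n k S J) :
    TransversalBase n k S (sortU I J) ∧ TransversalBase n k S (sortV I J) := by
  have hU : sortU I J = parityFinset I J 0 := rfl
  have hV : sortV I J = parityFinset I J 1 := rfl
  rcases Nat.eq_zero_or_pos n with rfl | hn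
  · obtain ⟨hIn, hIc, f, hfinj, hfim, hfS⟩ := hI
    have hIe : I = ∅ := Finset.subset_empty.mp (by simpa using hIn)
    obtain ⟨hJn, hJc, g, hginj, hgim, hgS⟩ := hJ
    have hJe : J = ∅ := Finset.subset_empty.mp (by simpa using hJn)
    subst hIe hJe
    have hk : k = 0 := by simpa using hIc.symm
    have hsl : sortList ∅ ∅ = [] := by simp [sortList]
    have hUe : sortU ∅ ∅ = ∅ := by simp [sortU, hsl]
    have hVe : sortV ∅ ∅ = ∅ := by simp [sortV, hsl]
    constructor
    · exact ⟨by simp [hUe], by simp [hUe, hk], f, hfinj, by rw [hfim, hUe], hfS⟩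
    · exact ⟨by simp [hVe], by simp [hVe, hk], f, hfinj, by rw [hfim, hVe], hfS⟩
  · exact ⟨hU ▸ transversalBase_parity hn S hS hI hJ 0 (by omega),
      hV ▸ transversalBase_parity hn S hS hI hJ 1 (by omega)⟩
end

section
/- For n ≥ 3, the sum over permutations w of [n-1] of w_1 · t^{des(w)+1} equals the sum over permutations w of [n-1] of (des(w)+1) · t^{des(w)+1}; i.e., ∑_{w ∈ S_{n-1}} w(1) t^{des(w)+1} = ∑_{w ∈ S_{n-1}} (des(w)+1) t^{des(w)+1} as polynomials in t. Equivalently, for each fixed d, ∑_{w ∈ S_{n-1}, des(w)=d} w(1) = (d+1) · A_{d+1,n-1}. -/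
open Polynomial

namespace FVDI

/-- descent count of a list of naturals -/
def des : List ℕ → ℕ
  | a :: b :: t => (if b < a then 1 else 0) + des (b :: t)
  | _ => 0

@[simp] lemma des_nil : des [] = 0 := rfl
@[simp] lemma des_single (a : ℕ) : des [a] = 0 := rfl
lemma des_cons2 (a b : ℕ) (t : List ℕ) :
    des (a :: b :: t) = (if b < a then 1 else 0) + des (b :: t) := rfl

lemma des_le : ∀ (b : ℕ) (t : List ℕ), des (b :: t) ≤ t.length := by
  intro b t
  induction t generalizing b with
  | nil => simp
  | cons c s ih =>
      rw [des_cons2]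
      have := ih c
      by_cases h : c < b <;> simp [h] <;> omega

lemma sum_map_add {α : Type*} (l : List α) (f g : α → ℕ) :
    (l.map (fun x => f x + g x)).sum = (l.map f).sum + (l.map g).sum := by
  induction l with
  | nil => simp
  | cons a l ih => simp [ih]; omega

lemma ne_nil_of_mem_permutations'Aux (a : ℕ) :
    ∀ (l : List ℕ) (u : List ℕ), u ∈ List.permutations'Aux a l → u ≠ [] := by
  intro l
  induction l with
  | nil => intro u hu; simp [List.permutations'Aux] at hu; simp [hu]
  | cons y ys ih =>
      intro u hu
      simp only [List.permutations'Aux, List.mem_cons, List.mem_map] at hu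
      rcases hu with rfl | ⟨v, _, rfl⟩ <;> simp

/-- Core insertion lemma: inserting the max `a` into a nonempty list. -/
lemma aux_sum (a : ℕ) :
    ∀ (t : List ℕ) (F : ℕ → ℕ → ℕ) (b : ℕ), (∀ x ∈ b :: t, x < a) →
    ((List.permutations'Aux a (b :: t)).map (fun u => F (des u) u.headI)).sum
      = F (des (b :: t) + 1) a + (des (b :: t) + 1) * F (des (b :: t)) b
        + (t.length - des (b :: t)) * F (des (b :: t) + 1) b := by
  intro t
  induction t with
  | nil =>
      intro F b hb
      have hba : b < a := hb b (by simp)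
      have hnab : ¬ a < b := by omega
      simp [List.permutations'Aux, des_cons2, hba, hnab]
  | cons c s ih =>
      intro F b hb
      have hba : b < a := hb b (by simp)
      have hca : ∀ x ∈ c :: s, x < a := fun x hx => hb x (by simp [hx])
      -- permutations'Aux a (b :: c :: s) = (a :: b :: c :: s) :: map (b :: ·) (permutations'Aux a (c :: s))
      rw [show List.permutations'Aux a (b :: c :: s)
            = (a :: b :: c :: s) :: (List.permutations'Aux a (c :: s)).map (b :: ·) from rfl]
      rw [List.map_cons, List.sum_cons, List.map_map]
      have hmap : ((List.permutations'Aux a (c :: s)).map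
            ((fun u => F (des u) u.headI) ∘ (b :: ·)))
          = (List.permutations'Aux a (c :: s)).map
            (fun u => (fun d h => F ((if h < b then 1 else 0) + d) b) (des u) u.headI) := by
        apply List.map_congr_left
        intro u hu
        obtain ⟨h, r, rfl⟩ : ∃ h r, u = h :: r := by
          rcases u with _ | ⟨h, r⟩
          · exact absurd rfl (ne_nil_of_mem_permutations'Aux a _ _ hu)
          · exact ⟨h, r, rfl⟩
        simp [des_cons2]
        rfl
      rw [hmap, ih (fun d h => F ((if h < b then 1 else 0) + d) b) c hca]
      have hnab : ¬ a < b := by omega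
      have hdes : des (b :: c :: s) = (if c < b then 1 else 0) + des (c :: s) := des_cons2 _ _ _
      have hle : des (c :: s) ≤ s.length := des_le c s
      by_cases hcb : c < b
      · simp only [hdes, hcb, if_true, hnab, if_false, des_cons2, hba, List.headI_cons]
        simp only [List.length_cons]
        have h1 : s.length + 1 - (1 + des (c :: s)) = s.length - des (c :: s) := by omega
        rw [h1]
        ring_nf
      · simp only [hdes, hcb, if_false, hnab, des_cons2, hba, if_true, List.headI_cons]
        simp only [List.length_cons]
        have h1 : s.length + 1 - (0 + des (c :: s)) = (s.length - des (c :: s)) + 1 := by omega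
        rw [h1]
        ring_nf

/-- all permutations (as lists) of `{0, ..., m-1}` -/
def perms (m : ℕ) : List (List ℕ) := ((List.range m).reverse).permutations'

lemma perms_succ (m : ℕ) :
    perms (m + 1) = (perms m).flatMap (List.permutations'Aux m) := by
  simp [perms, List.range_succ]

lemma mem_perms {m : ℕ} {l : List ℕ} : l ∈ perms m ↔ l.Perm ((List.range m).reverse) :=
  List.mem_permutations'

lemma length_of_mem_perms {m : ℕ} {l : List ℕ} (h : l ∈ perms m) : l.length = m := by
  have := (mem_perms.1 h).length_eq
  simpa using this

lemma lt_of_mem_perms {m : ℕ} {l : List ℕ} (h : l ∈ perms m) : ∀ x ∈ l, x < m := by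
  intro x hx
  have := (mem_perms.1 h).mem_iff.1 hx
  simpa using this

/-- count of permutations of `[m]` with `d` descents, as a list sum -/
def cnt (m d : ℕ) : ℕ := ((perms m).map (fun l => if des l = d then 1 else 0)).sum

/-- head-weighted sum -/
def hsum (m d : ℕ) : ℕ := ((perms m).map (fun l => if des l = d then l.headI + 1 else 0)).sum

lemma cnt_eq_zero {m d : ℕ} (h : m < d) : cnt (m + 1) d = 0 := by
  rw [cnt, List.sum_eq_zero]
  intro x hx
  simp only [List.mem_map] at hx
  obtain ⟨l, hl, rfl⟩ := hx
  have hlen := length_of_mem_perms hl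
  obtain ⟨b, t, rfl⟩ : ∃ b t, l = b :: t := by
    rcases l with _ | ⟨b, t⟩
    · simp at hlen
    · exact ⟨b, t, rfl⟩
  have h1 : des (b :: t) ≤ t.length := des_le b t
  have h2 : t.length = m := by simpa using hlen
  have : des (b :: t) ≠ d := by omega
  simp [this]

lemma hsum_eq_zero {m d : ℕ} (h : m < d) : hsum (m + 1) d = 0 := by
  rw [hsum, List.sum_eq_zero]
  intro x hx
  simp only [List.mem_map] at hx
  obtain ⟨l, hl, rfl⟩ := hx
  have hlen := length_of_mem_perms hl
  obtain ⟨b, t, rfl⟩ : ∃ b t, l = b :: t := by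
    rcases l with _ | ⟨b, t⟩
    · simp at hlen
    · exact ⟨b, t, rfl⟩
  have h1 : des (b :: t) ≤ t.length := des_le b t
  have h2 : t.length = m := by simpa using hlen
  have : des (b :: t) ≠ d := by omega
  simp [this]

lemma sum_flatMap' {α : Type*} (l : List α) (f : α → List ℕ) :
    (l.flatMap f).sum = (l.map (fun x => (f x).sum)).sum := by
  induction l with
  | nil => simp
  | cons a l ih => simp [ih]

/-- Decomposition of the sums over `perms (m+2)` via insertion of the max `m+1`. -/
lemma step (m : ℕ) (F : ℕ → ℕ → ℕ) :
    ((perms (m + 2)).map (fun l => F (des l) l.headI)).sum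
      = ((perms (m + 1)).map (fun v => F (des v + 1) (m + 1)
          + (des v + 1) * F (des v) v.headI
          + (m - des v) * F (des v + 1) v.headI)).sum := by
  rw [perms_succ, List.map_flatMap, sum_flatMap']
  congr 1
  apply List.map_congr_left
  intro v hv
  have hlen := length_of_mem_perms hv
  obtain ⟨b, t, rfl⟩ : ∃ b t, v = b :: t := by
    rcases v with _ | ⟨b, t⟩
    · simp at hlen
    · exact ⟨b, t, rfl⟩
  have hlt : ∀ x ∈ b :: t, x < m + 1 := lt_of_mem_perms hv
  have ht : t.length = m := by simpa using hlen
  rw [aux_sum (m + 1) t F b hlt, ht]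
  simp

lemma sum_map_mul {α : Type*} (l : List α) (c : ℕ) (f : α → ℕ) :
    (l.map (fun x => c * f x)).sum = c * (l.map f).sum := by
  induction l with
  | nil => simp
  | cons a l ih => simp [ih, Nat.mul_add]

lemma main_list (m : ℕ) : ∀ d : ℕ, hsum (m + 1) d = (d + 1) * cnt (m + 1) d := by
  induction m with
  | zero =>
      intro d
      rcases d with _ | d <;>
        simp [hsum, cnt, perms, List.range_succ, des, List.permutations'Aux]
  | succ m ih =>
      intro d
      rcases d with _ | d'
      · have hh : hsum (m + 1 + 1) 0 = hsum (m + 1) 0 := by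
          refine (step m (fun e h => if e = 0 then h + 1 else 0)).trans ?_
          unfold hsum
          congr 1
          apply List.map_congr_left
          intro v hv
          by_cases hdv : des v = 0 <;> simp [hdv]
        have hc : cnt (m + 1 + 1) 0 = cnt (m + 1) 0 := by
          refine (step m (fun e h => if e = 0 then 1 else 0)).trans ?_
          unfold cnt
          congr 1
          apply List.map_congr_left
          intro v hv
          by_cases hdv : des v = 0 <;> simp [hdv]
        rw [hh, hc, ih 0]
      · have e1 : hsum (m + 1 + 1) (d' + 1)
            = (m + 2) * cnt (m + 1) d' + (m - d') * hsum (m + 1) d'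
              + (d' + 2) * hsum (m + 1) (d' + 1) := by
          refine (step m (fun e h => if e = d' + 1 then h + 1 else 0)).trans ?_
          unfold cnt hsum
          rw [← sum_map_mul, ← sum_map_mul, ← sum_map_mul, ← sum_map_add, ← sum_map_add]
          congr 1
          apply List.map_congr_left
          intro v hv
          by_cases h1 : des v = d'
          · simp [h1]
          · by_cases h2 : des v = d' + 1 <;> simp [h1, h2] <;> ring
        have e2 : cnt (m + 1 + 1) (d' + 1)
            = cnt (m + 1) d' + (m - d') * cnt (m + 1) d'
              + (d' + 2) * cnt (m + 1) (d' + 1) := by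
          refine (step m (fun e h => if e = d' + 1 then 1 else 0)).trans ?_
          unfold cnt
          rw [← sum_map_mul, ← sum_map_mul, ← sum_map_add, ← sum_map_add]
          congr 1
          apply List.map_congr_left
          intro v hv
          by_cases h1 : des v = d'
          · simp [h1]
          · by_cases h2 : des v = d' + 1 <;> simp [h1, h2] <;> ring
        rw [e1, e2, ih d', ih (d' + 1)]
        by_cases hdm : d' ≤ m
        · obtain ⟨e, rfl⟩ := Nat.exists_eq_add_of_le hdm
          have he : d' + e - d' = e := by omega
          rw [he]
          ring
        · have h0 : cnt (m + 1) d' = 0 := cnt_eq_zero (by omega)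
          rw [h0]
          ring

/-! ### Transfer between `Equiv.Perm (Fin m)` and `perms m` -/

def toList {m : ℕ} (w : Equiv.Perm (Fin m)) : List ℕ :=
  List.ofFn (fun i => ((w i : Fin m) : ℕ))

lemma toList_perm {m : ℕ} (w : Equiv.Perm (Fin m)) :
    (toList w).Perm ((List.range m).reverse) := by
  have h1 : toList w = List.ofFn (Fin.val ∘ ⇑w) := rfl
  have h2 : (List.ofFn (Fin.val ∘ ⇑w)).Perm (List.ofFn (Fin.val : Fin m → ℕ)) :=
    Equiv.Perm.ofFn_comp_perm w Fin.val
  have h3 : List.ofFn (Fin.val : Fin m → ℕ) = List.range m := by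
    exact List.ext_getElem (by simp) (by simp)
  rw [h1]
  refine h2.trans ?_
  rw [h3]
  exact (List.reverse_perm _).symm

lemma toList_mem {m : ℕ} (w : Equiv.Perm (Fin m)) : toList w ∈ perms m :=
  mem_perms.2 (toList_perm w)

lemma toList_injective {m : ℕ} : Function.Injective (toList (m := m)) := by
  intro w w' h
  have h2 := List.ofFn_inj.1 h
  ext i
  exact congrFun h2 i ▸ rfl

lemma nodup_perms (m : ℕ) : (perms m).Nodup := by
  have h1 : ((List.range m).reverse).permutations.Nodup :=
    List.nodup_permutations _ (by simp [List.nodup_range])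
  exact (List.permutations_perm_permutations' _).nodup h1

lemma perms_coe_eq (m : ℕ) :
    (↑(perms m) : Multiset (List ℕ)) =
      (Finset.univ.val.map (fun w : Equiv.Perm (Fin m) => toList w)) := by
  rw [Multiset.Nodup.ext (Multiset.coe_nodup.2 (nodup_perms m))
    (Multiset.Nodup.map toList_injective Finset.univ.nodup)]
  intro l
  simp only [Multiset.mem_coe, Multiset.mem_map, Finset.mem_val, Finset.mem_univ, true_and]
  constructor
  · intro hl
    have hp := mem_perms.1 hl
    have hnd : l.Nodup := hp.symm.nodup (by simp [List.nodup_range])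
    have hlen : l.length = m := by simpa using hp.length_eq
    have hmem : ∀ x ∈ l, x < m := lt_of_mem_perms hl
    have hget : ∀ (j : ℕ) (hj : j < m), l.get ⟨j, by omega⟩ < m := by
      intro j hj
      exact hmem _ (List.get_mem l _)
    refine ⟨Equiv.ofBijective (fun i : Fin m => (⟨l.get ⟨i.1, by omega⟩, hget i.1 i.2⟩ : Fin m))
      (Finite.injective_iff_bijective.1 ?_), ?_⟩
    · intro i j hij
      have h3 : l.get ⟨i.1, by omega⟩ = l.get ⟨j.1, by omega⟩ := congrArg Fin.val hij
      have h4 := (List.nodup_iff_injective_get.1 hnd) h3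
      have h5 := congrArg (fun x : Fin l.length => (x : ℕ)) h4
      exact Fin.ext h5
    · refine List.ext_get (by simp [toList, hlen]) ?_
      intro n h1 h2
      simp only [toList, List.get_ofFn, Equiv.ofBijective_apply]
      rfl
  · rintro ⟨w, rfl⟩
    exact toList_mem w

lemma transfer {m : ℕ} (F : ℕ → ℕ → ℕ) :
    (∑ w : Equiv.Perm (Fin m), F (des (toList w)) (toList w).headI)
      = ((perms m).map (fun l => F (des l) l.headI)).sum := by
  have h0 : (∑ w : Equiv.Perm (Fin m), F (des (toList w)) (toList w).headI)
      = ((Finset.univ.val.map (fun w : Equiv.Perm (Fin m) => toList w)).map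
          (fun l => F (des l) l.headI)).sum := by
    rw [Multiset.map_map]
    rfl
  rw [h0, ← perms_coe_eq, Multiset.map_coe, Multiset.sum_coe]

lemma des_ofFn (k : ℕ) (G : ℕ → ℕ) :
    des (List.ofFn (fun i : Fin (k + 1) => G i)) =
      ∑ i ∈ Finset.range k, (if G (i + 1) < G i then 1 else 0) := by
  induction k generalizing G with
  | zero => simp [List.ofFn_succ]
  | succ k ih =>
      have e1 : (List.ofFn fun i : Fin (k + 1 + 1) => G ↑i)
          = G 0 :: List.ofFn (fun i : Fin (k + 1) => G (↑i + 1)) := by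
        rw [List.ofFn_succ]
        simp [Fin.val_succ]
      have e2 : List.ofFn (fun i : Fin (k + 1) => G (↑i + 1))
          = G 1 :: List.ofFn (fun i : Fin k => G (↑i + 1 + 1)) := by
        rw [List.ofFn_succ]
        simp [Fin.val_succ]
      rw [e1, e2, des_cons2, ← e2, ih (fun j => G (j + 1)),
        Finset.sum_range_succ' (fun i => if G (i + 1) < G i then 1 else 0) k]
      ring

lemma numDescents_eq {k : ℕ} (w : Equiv.Perm (Fin (k + 1))) :
    numDescents w = des (toList w) := by
  classical
  set G : ℕ → ℕ := fun j => if h : j < k + 1 then ((w ⟨j, h⟩ : Fin (k + 1)) : ℕ) else 0 with hG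
  have h1 : toList w = List.ofFn (fun i : Fin (k + 1) => G ↑i) := by
    unfold toList
    congr 1
    funext i
    simp only [hG, i.isLt, dif_pos]
  rw [h1, des_ofFn]
  rw [numDescents, Finset.card_filter]
  have h2 : ∀ i : Fin (k + 1),
      (if ((i : ℕ) + 1 < k + 1 ∧
            w ⟨((i : ℕ) + 1) % (k + 1), Nat.mod_lt _ i.pos⟩ < w i) then 1 else 0)
        = (fun j : ℕ => if (j + 1 < k + 1 ∧ G (j + 1) < G j) then (1:ℕ) else 0) ↑i := by
    intro i
    by_cases hi : (i : ℕ) + 1 < k + 1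
    · have hmod : (((i : ℕ) + 1) % (k + 1)) = (i : ℕ) + 1 := Nat.mod_eq_of_lt hi
      have hfin : (⟨((i : ℕ) + 1) % (k + 1), Nat.mod_lt _ i.pos⟩ : Fin (k + 1))
          = ⟨(i : ℕ) + 1, hi⟩ := Fin.ext hmod
      have hG1 : G ((i : ℕ) + 1) = ((w ⟨(i : ℕ) + 1, hi⟩ : Fin (k + 1)) : ℕ) := by
        simp only [hG, hi, dif_pos]
      have hG0 : G (i : ℕ) = ((w i : Fin (k + 1)) : ℕ) := by
        simp only [hG, i.isLt, dif_pos, Fin.eta]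
      simp only [hfin, hi, true_and, hG1, hG0, Fin.lt_def]
    · simp [hi]
  rw [Finset.sum_congr rfl (fun i _ => h2 i),
    Fin.sum_univ_eq_sum_range (fun j : ℕ => if (j + 1 < k + 1 ∧ G (j + 1) < G j) then (1:ℕ) else 0) (k + 1),
    Finset.sum_range_succ]
  have h3 : ¬ (k + 1 < k + 1) := lt_irrefl _
  simp only [h3, false_and, if_false, add_zero]
  refine Finset.sum_congr rfl ?_
  intro i hi
  have : i + 1 < k + 1 := by
    have := Finset.mem_range.1 hi
    omega
  simp [this]

lemma headI_toList {k : ℕ} (w : Equiv.Perm (Fin (k + 1))) (h : 0 < k + 1) :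
    (toList w).headI = ((w ⟨0, h⟩ : Fin (k + 1)) : ℕ) := by
  unfold toList
  rw [List.ofFn_succ]
  simp only [List.headI_cons]
  congr 1

lemma perm_level (m : ℕ) (hm : 0 < m) (d : ℕ) :
    (∑ w : Equiv.Perm (Fin m), if numDescents w = d then ((w ⟨0, hm⟩ : Fin m) : ℕ) + 1 else 0)
      = (d + 1) * ∑ w : Equiv.Perm (Fin m), (if numDescents w = d then 1 else 0) := by
  obtain ⟨k, rfl⟩ := Nat.exists_eq_succ_of_ne_zero hm.ne'
  have t1 := transfer (m := k + 1) (fun e h => if e = d then h + 1 else 0)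
  have t2 := transfer (m := k + 1) (fun e h => if e = d then 1 else 0)
  have r1 : (∑ w : Equiv.Perm (Fin (k + 1)),
      if numDescents w = d then ((w ⟨0, hm⟩ : Fin (k + 1)) : ℕ) + 1 else 0) = hsum (k + 1) d := by
    unfold hsum
    rw [← t1]
    refine Finset.sum_congr rfl ?_
    intro w _
    rw [numDescents_eq w, headI_toList w hm]
  have r2 : (∑ w : Equiv.Perm (Fin (k + 1)), (if numDescents w = d then (1:ℕ) else 0))
      = cnt (k + 1) d := by
    unfold cnt
    rw [← t2]
    refine Finset.sum_congr rfl ?_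
    intro w _
    rw [numDescents_eq w]
  rw [r1, r2, main_list k d]

end FVDI

/-- For `n ≥ 3`, `∑_{w ∈ S_{n-1}} w(1) t^{des(w)+1} = ∑_{w ∈ S_{n-1}} (des(w)+1) t^{des(w)+1}`;
equivalently, for each `d`, `∑_{w : des(w) = d} w(1) = (d+1)·A_{d+1,n-1}`. -/
theorem first_value_descent_identity (n : ℕ) (hn : 3 ≤ n) :
    (∑ w : Equiv.Perm (Fin (n - 1)),
        (C (((w ⟨0, by omega⟩ : Fin (n - 1)) : ℕ) + 1) * X ^ (numDescents w + 1) :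
          Polynomial ℕ) =
      ∑ w : Equiv.Perm (Fin (n - 1)),
        (C (numDescents w + 1) * X ^ (numDescents w + 1) : Polynomial ℕ)) ∧
    (∀ d : ℕ,
      ∑ w ∈ Finset.univ.filter
          (fun w : Equiv.Perm (Fin (n - 1)) => numDescents w = d),
          (((w ⟨0, by omega⟩ : Fin (n - 1)) : ℕ) + 1) =
        (d + 1) *
          (Finset.univ.filter
            (fun w : Equiv.Perm (Fin (n - 1)) => numDescents w = d)).card) := by
  classical
  have hm : 0 < n - 1 := by omega
  have key : ∀ d : ℕ,
      ∑ w ∈ Finset.univ.filter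
          (fun w : Equiv.Perm (Fin (n - 1)) => numDescents w = d),
          (((w ⟨0, by omega⟩ : Fin (n - 1)) : ℕ) + 1) =
        (d + 1) *
          (Finset.univ.filter
            (fun w : Equiv.Perm (Fin (n - 1)) => numDescents w = d)).card := by
    intro d
    rw [Finset.sum_filter, Finset.card_filter]
    exact FVDI.perm_level (n - 1) hm d
  refine ⟨?_, key⟩
  have hmap : ∀ w : Equiv.Perm (Fin (n - 1)), w ∈ (Finset.univ : Finset (Equiv.Perm (Fin (n - 1)))) →
      numDescents w ∈ Finset.range n := by
    intro w _
    have h1 : numDescents w ≤ (Finset.univ : Finset (Fin (n - 1))).card :=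
      Finset.card_filter_le _ _
    have h2 : (Finset.univ : Finset (Fin (n - 1))).card = n - 1 := by
      rw [Finset.card_univ, Fintype.card_fin]
    rw [Finset.mem_range]
    omega
  rw [← Finset.sum_fiberwise_of_maps_to hmap
      (fun w : Equiv.Perm (Fin (n - 1)) =>
        (C (((w ⟨0, by omega⟩ : Fin (n - 1)) : ℕ) + 1) * X ^ (numDescents w + 1) : Polynomial ℕ)),
    ← Finset.sum_fiberwise_of_maps_to hmap
      (fun w : Equiv.Perm (Fin (n - 1)) =>
        (C (numDescents w + 1) * X ^ (numDescents w + 1) : Polynomial ℕ))]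
  refine Finset.sum_congr rfl ?_
  intro d _
  have hd : ∀ w ∈ Finset.univ.filter
      (fun w : Equiv.Perm (Fin (n - 1)) => numDescents w = d), numDescents w = d :=
    fun w hw => (Finset.mem_filter.1 hw).2
  calc ∑ w ∈ Finset.univ.filter (fun w : Equiv.Perm (Fin (n - 1)) => numDescents w = d),
        (C (((w ⟨0, by omega⟩ : Fin (n - 1)) : ℕ) + 1) * X ^ (numDescents w + 1) : Polynomial ℕ)
      = ∑ w ∈ Finset.univ.filter (fun w : Equiv.Perm (Fin (n - 1)) => numDescents w = d),
        (C (((w ⟨0, by omega⟩ : Fin (n - 1)) : ℕ) + 1) * X ^ (d + 1) : Polynomial ℕ) :=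
        Finset.sum_congr rfl (fun w hw => by rw [hd w hw])
    _ = (∑ w ∈ Finset.univ.filter (fun w : Equiv.Perm (Fin (n - 1)) => numDescents w = d),
          (C (((w ⟨0, by omega⟩ : Fin (n - 1)) : ℕ) + 1) : Polynomial ℕ)) * X ^ (d + 1) :=
        (Finset.sum_mul _ _ _).symm
    _ = (C (∑ w ∈ Finset.univ.filter (fun w : Equiv.Perm (Fin (n - 1)) => numDescents w = d),
          (((w ⟨0, by omega⟩ : Fin (n - 1)) : ℕ) + 1)) : Polynomial ℕ) * X ^ (d + 1) := by
        rw [map_sum]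
    _ = (C ((d + 1) * (Finset.univ.filter
          (fun w : Equiv.Perm (Fin (n - 1)) => numDescents w = d)).card) : Polynomial ℕ)
          * X ^ (d + 1) := by
        rw [key d]
    _ = (Finset.univ.filter (fun w : Equiv.Perm (Fin (n - 1)) => numDescents w = d)).card
          • ((C (d + 1) : Polynomial ℕ) * X ^ (d + 1)) := by
        rw [nsmul_eq_mul, map_mul, ← Polynomial.C_eq_natCast]
        simp only [Nat.cast_id]
        ring
    _ = ∑ _w ∈ Finset.univ.filter (fun w : Equiv.Perm (Fin (n - 1)) => numDescents w = d),
          ((C (d + 1) : Polynomial ℕ) * X ^ (d + 1)) := (Finset.sum_const _).symm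
    _ = ∑ w ∈ Finset.univ.filter (fun w : Equiv.Perm (Fin (n - 1)) => numDescents w = d),
          (C (numDescents w + 1) * X ^ (numDescents w + 1) : Polynomial ℕ) :=
        Finset.sum_congr rfl (fun w hw => by rw [hd w hw])
end
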